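/- arXiv:0807.1620 — 4 statements merged into one kernel-verified Lean document; each statement's English description precedes it below -/
import Mathlib

section
/- Let G be a connected simple graph and C a cycle in G. If there exist two vertices x, y on C such that the distance between x and y along C (the shorter arc) is strictly greater than the distance d_G(x,y) in G, then C is the symmetric difference (edge-wise) of two cycles each of length strictly less than the length of C. -/
open SimpleGraph

/-- Distance along a cycle `c`: graph distance in the graph formed by the edges of `c`
(for a cycle this is the minimum of the lengths of the two arcs). -/
noncomputable def cycDist {V : Type*} {G : SimpleGraph V} {a : V} (c : G.Walk a a)
    (x y : V) : ℕ :=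
  (SimpleGraph.fromEdgeSet {e | e ∈ c.edges}).dist x y

section Aux

variable {V : Type*} [DecidableEq V] {G : SimpleGraph V} {a : V}

private lemma aux_dist_triangle_of_reachable {H : SimpleGraph V} {u z v : V}
    (h1 : H.Reachable u z) (h2 : H.Reachable z v) :
    H.dist u v ≤ H.dist u z + H.dist z v := by
  obtain ⟨p, hp⟩ := h1.exists_walk_length_eq_dist
  obtain ⟨q, hq⟩ := h2.exists_walk_length_eq_dist
  rw [← hp, ← hq, ← SimpleGraph.Walk.length_append]
  apply SimpleGraph.dist_le

private lemma aux_mem_support_rotate_iff {c : G.Walk a a} {u v : V} (hu : u ∈ c.support) :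
    v ∈ (c.rotate u hu).support ↔ v ∈ c.support := by
  show v ∈ ((c.dropUntil u hu).append (c.takeUntil u hu)).support ↔ _
  rw [SimpleGraph.Walk.mem_support_append_iff, or_comm,
    ← SimpleGraph.Walk.mem_support_append_iff, SimpleGraph.Walk.take_spec]

private lemma aux_edges_mem_fromEdgeSet {c : G.Walk a a} {u v : V} (p : G.Walk u v)
    (hp : ∀ e ∈ p.edges, e ∈ c.edges) :
    ∀ e ∈ p.edges, e ∈ (SimpleGraph.fromEdgeSet {e | e ∈ c.edges}).edgeSet := by
  intro e he
  rw [SimpleGraph.edgeSet_fromEdgeSet, Set.mem_diff]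
  exact ⟨hp e he, G.not_isDiag_of_mem_edgeSet (p.edges_subset_edgeSet he)⟩

private lemma aux_cycDist_le {c : G.Walk a a} {u v : V} (p : G.Walk u v)
    (hp : ∀ e ∈ p.edges, e ∈ c.edges) :
    cycDist c u v ≤ p.length := by
  calc cycDist c u v ≤ (p.transfer _ (aux_edges_mem_fromEdgeSet p hp)).length :=
        SimpleGraph.dist_le _
    _ = p.length := SimpleGraph.Walk.length_transfer _ _

private lemma aux_reachable {c : G.Walk a a} {u v : V} (hu : u ∈ c.support)
    (hv : v ∈ c.support) :
    (SimpleGraph.fromEdgeSet {e | e ∈ c.edges}).Reachable u v := by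
  have hedges : ∀ e ∈ (c.rotate u hu).edges, e ∈ c.edges := fun e he =>
    ((c.rotate_edges u hu).mem_iff).mp he
  let p := (c.rotate u hu).transfer _ (aux_edges_mem_fromEdgeSet _ hedges)
  have hvp : v ∈ p.support := by
    rw [SimpleGraph.Walk.support_transfer]
    exact (aux_mem_support_rotate_iff hu).mpr hv
  exact ⟨p.takeUntil v hvp⟩

private lemma aux_cycDist_self {c : G.Walk a a} (u : V) : cycDist c u u = 0 :=
  SimpleGraph.dist_self

private lemma aux_cycDist_comm {c : G.Walk a a} (u v : V) :
    cycDist c u v = cycDist c v u :=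
  SimpleGraph.dist_comm

end Aux

/-- If a cycle `C` in a connected graph has two vertices whose distance along `C` exceeds
their distance in `G`, then `C` is the edge-symmetric-difference of two strictly shorter
cycles. -/
theorem shortcut_cycle_is_symmDiff_of_shorter_cycles
    {V : Type*} [Fintype V] (G : SimpleGraph V) (hG : G.Connected)
    {a : V} (c : G.Walk a a) (hc : c.IsCycle)
    (x y : V) (hx : x ∈ c.support) (hy : y ∈ c.support)
    (h : G.dist x y < cycDist c x y) :
    ∃ (b₁ b₂ : V) (c₁ : G.Walk b₁ b₁) (c₂ : G.Walk b₂ b₂),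
      c₁.IsCycle ∧ c₂.IsCycle ∧ c₁.length < c.length ∧ c₂.length < c.length ∧
      {e | e ∈ c.edges} = symmDiff {e | e ∈ c₁.edges} {e | e ∈ c₂.edges} := by
  classical
  -- Choose a pair minimizing `G.dist` among "shortcut" pairs.
  set S : Set ℕ :=
    {n | ∃ u v, u ∈ c.support ∧ v ∈ c.support ∧ G.dist u v < cycDist c u v ∧ G.dist u v = n}
    with hSdef
  have hSne : S.Nonempty := ⟨G.dist x y, x, y, hx, hy, h, rfl⟩
  obtain ⟨x', y', hx', hy', h', hdval⟩ := Nat.sInf_mem hSne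
  have hmin : ∀ u v, u ∈ c.support → v ∈ c.support → G.dist u v < cycDist c u v →
      G.dist x' y' ≤ G.dist u v := by
    intro u v hu hv hlt
    rw [hdval]
    exact Nat.sInf_le ⟨u, v, hu, hv, hlt, rfl⟩
  clear hdval
  -- Basic facts about the minimizing pair.
  have hne : x' ≠ y' := by
    rintro rfl
    rw [aux_cycDist_self, SimpleGraph.dist_self] at h'
    exact absurd h' (lt_irrefl 0)
  have hdpos : 0 < G.dist x' y' := hG.pos_dist_of_ne hne
  -- Shortest path in `G` between `x'` and `y'`.
  obtain ⟨Q, hQpath, hQlen⟩ := hG.exists_path_of_dist x' y'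
  -- The shortest path meets the cycle only at its endpoints.
  have hint : ∀ z ∈ Q.support, z ∈ c.support → z = x' ∨ z = y' := by
    intro z hzQ hzc
    by_contra hzne
    push_neg at hzne
    obtain ⟨hzx, hzy⟩ := hzne
    have hlensum : (Q.takeUntil z hzQ).length + (Q.dropUntil z hzQ).length = Q.length := by
      conv_rhs => rw [← Q.take_spec hzQ]
      rw [SimpleGraph.Walk.length_append]
    have h1pos : 0 < (Q.takeUntil z hzQ).length := by
      rcases Nat.eq_zero_or_pos (Q.takeUntil z hzQ).length with h0 | h0
      · exact absurd ((SimpleGraph.Walk.nil_iff_length_eq.mpr h0).eq) (Ne.symm hzx)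
      · exact h0
    have h2pos : 0 < (Q.dropUntil z hzQ).length := by
      rcases Nat.eq_zero_or_pos (Q.dropUntil z hzQ).length with h0 | h0
      · exact absurd ((SimpleGraph.Walk.nil_iff_length_eq.mpr h0).eq) hzy
      · exact h0
    have hd1 : G.dist x' z ≤ (Q.takeUntil z hzQ).length := SimpleGraph.dist_le _
    have hd2 : G.dist z y' ≤ (Q.dropUntil z hzQ).length := SimpleGraph.dist_le _
    have hm1 : cycDist c x' z ≤ G.dist x' z := by
      by_contra hlt
      push_neg at hlt
      have := hmin _ _ hx' hzc hlt
      omega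
    have hm2 : cycDist c z y' ≤ G.dist z y' := by
      by_contra hlt
      push_neg at hlt
      have := hmin _ _ hzc hy' hlt
      omega
    have htri : cycDist c x' y' ≤ cycDist c x' z + cycDist c z y' :=
      aux_dist_triangle_of_reachable (aux_reachable hx' hzc) (aux_reachable hzc hy')
    omega
  -- The shortest path is edge-disjoint from the cycle.
  have hQc : ∀ e ∈ Q.edges, e ∉ c.edges := by
    intro e heQ hec
    induction e with
    | h u v =>
      have huQ : u ∈ Q.support := Q.fst_mem_support_of_mem_edges heQ
      have hvQ : v ∈ Q.support := Q.snd_mem_support_of_mem_edges heQ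
      have huc : u ∈ c.support := c.fst_mem_support_of_mem_edges hec
      have hvc : v ∈ c.support := c.snd_mem_support_of_mem_edges hec
      have huv : u ≠ v := fun hh =>
        (G.not_isDiag_of_mem_edgeSet (Q.edges_subset_edgeSet heQ)) (by simp [hh])
      have he' : s(u, v) = s(x', y') := by
        rcases hint u huQ huc with rfl | rfl <;> rcases hint v hvQ hvc with rfl | rfl
        · exact absurd rfl huv
        · rfl
        · exact Sym2.eq_swap
        · exact absurd rfl huv
      have hadj : (SimpleGraph.fromEdgeSet {e | e ∈ c.edges}).Adj x' y' := by
        rw [SimpleGraph.fromEdgeSet_adj]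
        exact ⟨he' ▸ hec, hne⟩
      have : cycDist c x' y' ≤ 1 := by
        calc cycDist c x' y' ≤ hadj.toWalk.length := SimpleGraph.dist_le _
          _ = 1 := rfl
      omega
  -- Rotate the cycle to start at `x'` and split it at `y'`.
  set c' := c.rotate x' hx' with hc'def
  have hc' : c'.IsCycle := hc.rotate hx'
  have hc'edges : ∀ e, e ∈ c'.edges ↔ e ∈ c.edges := fun e => (c.rotate_edges x' hx').mem_iff
  have hc'len : c'.length = c.length := by
    rw [← SimpleGraph.Walk.length_edges, ← SimpleGraph.Walk.length_edges]
    exact (c.rotate_edges x' hx').perm.length_eq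
  have hy'c' : y' ∈ c'.support := (aux_mem_support_rotate_iff hx').mpr hy'
  set A1 := c'.takeUntil y' hy'c' with hA1def
  set A2 := c'.dropUntil y' hy'c' with hA2def
  have hspec : A1.append A2 = c' := c'.take_spec hy'c'
  -- Edges of the two arcs.
  have hedgesplit : A1.edges ++ A2.edges = c'.edges := by
    rw [← SimpleGraph.Walk.edges_append, hspec]
  have hA1sub : ∀ e ∈ A1.edges, e ∈ c.edges := fun e he =>
    (hc'edges e).mp (hedgesplit ▸ List.mem_append_left _ he)
  have hA2sub : ∀ e ∈ A2.edges, e ∈ c.edges := fun e he =>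
    (hc'edges e).mp (hedgesplit ▸ List.mem_append_right _ he)
  have hedisj : ∀ e ∈ A1.edges, e ∉ A2.edges := by
    have := hc'.isCircuit.isTrail.edges_nodup
    rw [← hedgesplit, List.nodup_append] at this
    exact fun e he1 he2 => this.2.2 e he1 e he2 rfl
  -- Supports of the two arcs.
  have hsuppsplit : A1.support ++ A2.support.tail = c'.support := by
    rw [← hspec, SimpleGraph.Walk.support_append]
  have htailsplit : A1.support.tail ++ A2.support.tail = c'.support.tail := by
    have h1 : A1.support = x' :: A1.support.tail := A1.support_eq_cons
    have h2 : c'.support = x' :: c'.support.tail := c'.support_eq_cons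
    rw [h1] at hsuppsplit
    rw [h2] at hsuppsplit
    simp only [List.cons_append, List.cons.injEq] at hsuppsplit
    exact hsuppsplit.2
  have htnodup : (A1.support.tail ++ A2.support.tail).Nodup := by
    rw [htailsplit]; exact hc'.support_nodup
  have hx'A2t : x' ∈ A2.support.tail :=
    SimpleGraph.Walk.end_mem_tail_support_of_ne (Ne.symm hne) A2
  have hy'A1t : y' ∈ A1.support.tail :=
    SimpleGraph.Walk.end_mem_tail_support_of_ne hne A1
  have hdisjt : ∀ w ∈ A1.support.tail, w ∉ A2.support.tail := by
    rw [List.nodup_append] at htnodup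
    exact fun w hw1 hw2 => htnodup.2.2 w hw1 w hw2 rfl
  have hx'A1t : x' ∉ A1.support.tail := fun hmem => hdisjt x' hmem hx'A2t
  have hy'A2t : y' ∉ A2.support.tail := fun hmem => hdisjt y' hy'A1t hmem
  have hA1path : A1.IsPath := by
    rw [SimpleGraph.Walk.isPath_def, A1.support_eq_cons]
    rw [List.nodup_append] at htnodup
    exact List.nodup_cons.mpr ⟨hx'A1t, htnodup.1⟩
  have hA2path : A2.IsPath := by
    rw [SimpleGraph.Walk.isPath_def, A2.support_eq_cons]
    rw [List.nodup_append] at htnodup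
    exact List.nodup_cons.mpr ⟨hy'A2t, htnodup.2.1⟩
  have hA1suppc : ∀ w ∈ A1.support, w ∈ c.support := fun w hw =>
    (aux_mem_support_rotate_iff hx').mp (c'.support_takeUntil_subset hy'c' hw)
  have hA2suppc : ∀ w ∈ A2.support, w ∈ c.support := fun w hw =>
    (aux_mem_support_rotate_iff hx').mp (c'.support_dropUntil_subset hy'c' hw)
  -- length facts
  have hlensplit : A1.length + A2.length = c.length := by
    rw [← hc'len, ← hspec, SimpleGraph.Walk.length_append]
  have hcd1 : cycDist c x' y' ≤ A1.length := aux_cycDist_le A1 hA1sub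
  have hcd2 : cycDist c x' y' ≤ A2.length := by
    rw [aux_cycDist_comm]
    exact aux_cycDist_le A2 hA2sub
  have hQA1 : Q.length < A1.length := by omega
  have hQA2 : Q.length < A2.length := by omega
  have hQpos : 0 < Q.length := by omega
  -- The two new cycles.
  refine ⟨x', x', A1.append Q.reverse, Q.append A2, ?_, ?_, ?_, ?_, ?_⟩
  · -- first cycle
    rw [SimpleGraph.Walk.isCycle_def]
    refine ⟨⟨?_⟩, ?_, ?_⟩
    · rw [SimpleGraph.Walk.edges_append, SimpleGraph.Walk.edges_reverse]
      refine List.Nodup.append hA1path.isTrail.edges_nodup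
        (List.nodup_reverse.mpr hQpath.isTrail.edges_nodup) ?_
      intro e he1 he2
      rw [List.mem_reverse] at he2
      exact hQc e he2 (hA1sub e he1)
    · intro hnil
      have : (A1.append Q.reverse).length = 0 := by rw [hnil]; rfl
      rw [SimpleGraph.Walk.length_append, SimpleGraph.Walk.length_reverse] at this
      omega
    · have hsupp : (A1.append Q.reverse).support.tail
          = A1.support.tail ++ Q.reverse.support.tail := by
        rw [SimpleGraph.Walk.support_append, A1.support_eq_cons]
        rfl
      rw [hsupp]
      have hn1 : A1.support.tail.Nodup := by
        have := hA1path.support_nodup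
        rw [A1.support_eq_cons, List.nodup_cons] at this
        exact this.2
      have hn2 : Q.reverse.support.tail.Nodup := by
        have := hQpath.reverse.support_nodup
        rw [Q.reverse.support_eq_cons, List.nodup_cons] at this
        exact this.2
      refine List.Nodup.append hn1 hn2 ?_
      intro w hw1 hw2
      have hwA1 : w ∈ A1.support := A1.support_eq_cons ▸ List.mem_cons_of_mem _ hw1
      have hwQ : w ∈ Q.support := by
        have : w ∈ Q.reverse.support := List.mem_of_mem_tail hw2
        rwa [SimpleGraph.Walk.support_reverse, List.mem_reverse] at this
      rcases hint w hwQ (hA1suppc w hwA1) with rfl | rfl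
      · exact hx'A1t hw1
      · -- w = y' but y' is the head of Q.reverse.support, not in its tail
        have := hQpath.reverse.support_nodup
        rw [Q.reverse.support_eq_cons] at this
        exact (List.nodup_cons.mp this).1 hw2
  · -- second cycle
    rw [SimpleGraph.Walk.isCycle_def]
    refine ⟨⟨?_⟩, ?_, ?_⟩
    · rw [SimpleGraph.Walk.edges_append]
      refine List.Nodup.append hQpath.isTrail.edges_nodup hA2path.isTrail.edges_nodup ?_
      intro e he1 he2
      exact hQc e he1 (hA2sub e he2)
    · intro hnil
      have : (Q.append A2).length = 0 := by rw [hnil]; rfl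
      rw [SimpleGraph.Walk.length_append] at this
      omega
    · have hsupp : (Q.append A2).support.tail
          = Q.support.tail ++ A2.support.tail := by
        rw [SimpleGraph.Walk.support_append, Q.support_eq_cons]
        rfl
      rw [hsupp]
      have hn1 : Q.support.tail.Nodup := by
        have := hQpath.support_nodup
        rw [Q.support_eq_cons, List.nodup_cons] at this
        exact this.2
      have hn2 : A2.support.tail.Nodup := by
        have := hA2path.support_nodup
        rw [A2.support_eq_cons, List.nodup_cons] at this
        exact this.2
      refine List.Nodup.append hn1 hn2 ?_
      intro w hw1 hw2
      have hwQ : w ∈ Q.support := List.mem_of_mem_tail hw1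
      have hwA2 : w ∈ A2.support := A2.support_eq_cons ▸ List.mem_cons_of_mem _ hw2
      rcases hint w hwQ (hA2suppc w hwA2) with rfl | rfl
      · -- w = x' but x' is the head of Q.support, not in its tail
        have := hQpath.support_nodup
        rw [Q.support_eq_cons] at this
        exact (List.nodup_cons.mp this).1 hw1
      · exact hy'A2t hw2
  · rw [SimpleGraph.Walk.length_append, SimpleGraph.Walk.length_reverse]
    omega
  · rw [SimpleGraph.Walk.length_append]
    omega
  · -- edge set equality
    ext e
    have hcmem : e ∈ c.edges ↔ e ∈ A1.edges ∨ e ∈ A2.edges := by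
      rw [← hc'edges, ← hedgesplit, List.mem_append]
    have h1mem : e ∈ (A1.append Q.reverse).edges ↔ e ∈ A1.edges ∨ e ∈ Q.edges := by
      rw [SimpleGraph.Walk.edges_append, List.mem_append, SimpleGraph.Walk.edges_reverse,
        List.mem_reverse]
    have h2mem : e ∈ (Q.append A2).edges ↔ e ∈ Q.edges ∨ e ∈ A2.edges := by
      rw [SimpleGraph.Walk.edges_append, List.mem_append]
    simp only [Set.mem_setOf_eq, Set.mem_symmDiff, h1mem, h2mem, hcmem]
    have hq1 : e ∈ Q.edges → e ∉ A1.edges := fun hq h1 => hQc e hq (hA1sub e h1)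
    have hq2 : e ∈ Q.edges → e ∉ A2.edges := fun hq h2 => hQc e hq (hA2sub e h2)
    have h12 : e ∈ A1.edges → e ∉ A2.edges := hedisj e
    constructor
    · rintro (h1 | h2)
      · exact Or.inl ⟨Or.inl h1, fun hh => hh.elim (fun hq => hq1 hq h1) (h12 h1)⟩
      · exact Or.inr ⟨Or.inr h2, fun hh => hh.elim (fun ha1 => h12 ha1 h2) (fun hq => hq2 hq h2)⟩
    · rintro (⟨h1 | hq, hn⟩ | ⟨hq | h2, hn⟩)
      · exact Or.inl h1
      · exact absurd (Or.inl hq) hn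
      · exact absurd (Or.inr hq) hn
      · exact Or.inr h2
end

section
/- Let G be a connected simple graph and C a shortest odd cycle of G, where moreover the girth of G is odd (equal to the length of C). Then C is a fundamental cycle of some BFS tree rooted at a vertex of C: there exist a vertex x on C, a BFS spanning tree T rooted at x, and an edge e of C not in T such that C is the unique cycle in T + e. -/
open SimpleGraph

section AuxLemmas

variable {V : Type*} {G : SimpleGraph V}

lemma aux_getVert_mem_support {u v : V} (p : G.Walk u v) {i : ℕ} (hi : i ≤ p.length) :
    p.getVert i ∈ p.support :=
  Walk.mem_support_iff_exists_getVert.mpr ⟨i, rfl, hi⟩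

lemma aux_path_getVert_inj {u v : V} {p : G.Walk u v} (hp : p.IsPath) :
    ∀ {i j : ℕ}, i ≤ p.length → j ≤ p.length → p.getVert i = p.getVert j → i = j := by
  induction p with
  | nil => intro i j hi hj _; simp at hi hj; omega
  | cons h q ih =>
    rw [Walk.cons_isPath_iff] at hp
    intro i j hi hj hij
    match i, j with
    | 0, 0 => rfl
    | 0, k + 1 =>
      exfalso
      rw [Walk.getVert_zero, Walk.getVert_cons_succ] at hij
      exact hp.2 (hij ▸ aux_getVert_mem_support q (by simpa using hj))
    | k + 1, 0 =>
      exfalso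
      rw [Walk.getVert_zero, Walk.getVert_cons_succ] at hij
      exact hp.2 (hij ▸ aux_getVert_mem_support q (by simpa using hi))
    | k + 1, l + 1 =>
      rw [Walk.getVert_cons_succ, Walk.getVert_cons_succ] at hij
      have := ih hp.1 (by simpa using hi) (by simpa using hj) hij
      omega

lemma aux_cycle_getVert_inj {b : V} {q : G.Walk b b} (hq : q.IsCycle) :
    ∀ {i j : ℕ}, 1 ≤ i → i ≤ q.length → 1 ≤ j → j ≤ q.length →
      q.getVert i = q.getVert j → i = j := by
  cases q with
  | nil => exact absurd rfl hq.ne_nil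
  | cons h p =>
    have hnd : p.support.Nodup := by
      have := hq.2
      simpa using this
    have hp : p.IsPath := Walk.IsPath.mk' hnd
    intro i j hi hi' hj hj' hij
    match i, j with
    | k + 1, l + 1 =>
      rw [Walk.getVert_cons_succ, Walk.getVert_cons_succ] at hij
      have := aux_path_getVert_inj hp (by simp at hi' ⊢; omega) (by simp at hj' ⊢; omega) hij
      omega

lemma aux_mem_edges {u v : V} (w : G.Walk u v) :
    ∀ {i : ℕ}, i < w.length → s(w.getVert i, w.getVert (i + 1)) ∈ w.edges := by
  induction w with
  | nil => intro i hi; simp at hi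
  | cons h p ih =>
    intro i hi
    match i with
    | 0 =>
      rw [Walk.getVert_zero, Walk.getVert_cons_succ, Walk.getVert_zero, Walk.edges_cons]
      exact List.mem_cons_self
    | k + 1 =>
      rw [Walk.getVert_cons_succ, Walk.getVert_cons_succ, Walk.edges_cons]
      exact List.mem_cons_of_mem _ (ih (by simp at hi; omega))

lemma aux_edges_mem {u v : V} (w : G.Walk u v) :
    ∀ {f : Sym2 V}, f ∈ w.edges → ∃ i, i < w.length ∧ f = s(w.getVert i, w.getVert (i + 1)) := by
  induction w with
  | nil => intro f hf; simp at hf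
  | cons h p ih =>
    intro f hf
    rw [Walk.edges_cons] at hf
    rcases List.mem_cons.mp hf with hf | hf
    · exact ⟨0, by simp, by simpa [Walk.getVert_zero, Walk.getVert_cons_succ] using hf⟩
    · obtain ⟨i, hi, hfe⟩ := ih hf
      exact ⟨i + 1, by simp; omega, by simpa [Walk.getVert_cons_succ] using hfe⟩

lemma aux_edge_path_length_one {x u : V} {t : G.Walk x u} (ht : t.IsPath)
    (he : s(u, x) ∈ t.edges) : t.length = 1 := by
  cases t with
  | nil => simp at he
  | cons h' q =>
    rw [Walk.cons_isPath_iff] at ht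
    rw [Walk.edges_cons] at he
    rcases List.mem_cons.mp he with he | he
    · rw [Sym2.eq_iff] at he
      rcases he with ⟨rfl, rfl⟩ | ⟨rfl, -⟩
      · exact absurd rfl h'.ne
      · rw [Walk.isPath_iff_eq_nil] at *
        simp [ht.1]
    · exact absurd (Walk.snd_mem_support_of_mem_edges q he) ht.2

lemma aux_extract {u v : V} (w : G.Walk u v) :
    (∃ p : G.Walk u v, p.IsPath ∧ p.length ≤ w.length ∧ p.length % 2 = w.length % 2) ∨
      (∃ (b : V) (q : G.Walk b b), q.IsCycle ∧ q.length ≤ w.length) := by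
  classical
  induction w with
  | nil => exact Or.inl ⟨Walk.nil, Walk.IsPath.nil, le_refl _, rfl⟩
  | @cons u x v h p ih =>
    rcases ih with ⟨p', hp', hlen', hpar'⟩ | ⟨b, q, hq, hlq⟩
    · by_cases hu : u ∈ p'.support
      · set t := p'.takeUntil u hu with htdef
        set r := p'.dropUntil u hu with hrdef
        have hsplit : t.length + r.length = p'.length := by
          have := congrArg Walk.length (p'.take_spec hu)
          rwa [Walk.length_append] at this
        by_cases hpar2 : (1 + t.length) % 2 = 0
        · left
          refine ⟨r, hp'.dropUntil hu, ?_, ?_⟩ <;> rw [Walk.length_cons] <;> omega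
        · right
          have htpath : t.IsPath := hp'.takeUntil hu
          have hne : s(u, x) ∉ t.edges := fun hmem => by
            have := aux_edge_path_length_one htpath hmem
            omega
          refine ⟨u, Walk.cons h t, (Walk.cons_isCycle_iff t h).mpr ⟨htpath, hne⟩, ?_⟩
          rw [Walk.length_cons, Walk.length_cons]
          omega
      · left
        exact ⟨Walk.cons h p', (Walk.cons_isPath_iff h p').mpr ⟨hp', hu⟩,
          by rw [Walk.length_cons, Walk.length_cons]; omega,
          by rw [Walk.length_cons, Walk.length_cons]; omega⟩
    · right
      exact ⟨b, q, hq, by rw [Walk.length_cons]; omega⟩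

lemma aux_odd_closed {u : V} (w : G.Walk u u) (hw : w.length % 2 = 1) :
    ∃ (b : V) (q : G.Walk b b), q.IsCycle ∧ q.length ≤ w.length := by
  cases w with
  | nil => simp at hw
  | @cons u x _ h p =>
    rw [Walk.length_cons] at hw
    rcases aux_extract p with ⟨p', hp', hlen', hpar'⟩ | ⟨b, q, hq, hlq⟩
    · by_cases he : s(u, x) ∈ p'.edges
      · have := aux_edge_path_length_one hp' he
        omega
      · exact ⟨u, Walk.cons h p', (Walk.cons_isCycle_iff p' h).mpr ⟨hp', he⟩,
          by rw [Walk.length_cons, Walk.length_cons]; omega⟩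
    · exact ⟨b, q, hq, by rw [Walk.length_cons]; omega⟩

lemma aux_parent (hG : G.Connected) (a v : V) (hv : v ≠ a) :
    ∃ u, G.Adj v u ∧ G.dist a u + 1 = G.dist a v := by
  obtain ⟨w, hw⟩ := hG.exists_walk_length_eq_dist a v
  have hd : 0 < G.dist a v := hG.pos_dist_of_ne (Ne.symm hv)
  cases hrev : w.reverse with
  | nil => exact absurd rfl hv
  | @cons _ u' _ h r =>
    have hlen : r.length + 1 = G.dist a v := by
      have := congrArg Walk.length hrev
      simp [hw] at this
      omega
    refine ⟨u', h, ?_⟩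
    have h1 : G.dist a u' ≤ r.length := by
      have h0 := dist_le r.reverse
      rw [Walk.length_reverse] at h0
      exact h0
    obtain ⟨s, hs⟩ := hG.exists_walk_length_eq_dist a u'
    have h2 := dist_le (s.concat h.symm)
    rw [Walk.length_concat, hs] at h2
    omega

lemma aux_tree (hG : G.Connected) (a : V) (par : V → V) (hpa : par a = a)
    (hpar : ∀ v, v ≠ a → G.Adj v (par v) ∧ G.dist a (par v) + 1 = G.dist a v) :
    fromRel (fun u v => par u = v) ≤ G ∧ (fromRel (fun u v => par u = v)).IsTree ∧
      ∀ v, (fromRel (fun u v => par u = v)).dist a v = G.dist a v := by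
  classical
  set T := fromRel (fun u v => par u = v) with hTdef
  have hTadj : ∀ u v, T.Adj u v ↔ u ≠ v ∧ (par u = v ∨ par v = u) := fun u v =>
    fromRel_adj _ u v
  have hle : T ≤ G := by
    intro u v huv
    rw [hTadj] at huv
    rcases huv.2 with h | h
    · have hua : u ≠ a := by rintro rfl; rw [hpa] at h; exact huv.1 h
      exact h ▸ (hpar u hua).1
    · have hva : v ≠ a := by rintro rfl; rw [hpa] at h; exact huv.1 h.symm
      exact (h ▸ (hpar v hva).1).symm
  have hadjpar : ∀ v, v ≠ a → T.Adj v (par v) := by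
    intro v hv
    rw [hTadj]
    refine ⟨fun h => ?_, Or.inl rfl⟩
    have h2 := (hpar v hv).2
    rw [← h] at h2
    omega
  have hreach : ∀ m v, G.dist a v = m → T.Reachable a v := by
    intro m
    induction m using Nat.strong_induction_on with
    | _ m ih =>
      intro v hm
      by_cases hva : v = a
      · subst hva; exact Reachable.refl _
      · have hp := hpar v hva
        have hr := ih (m - 1) (by omega) (par v) (by omega)
        exact hr.trans (hadjpar v hva).symm.reachable
  have hTconn : T.Connected := by
    rw [connected_iff]
    exact ⟨fun u v => (hreach _ u rfl).symm.trans (hreach _ v rfl), ⟨a⟩⟩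
  have hTdist_le : ∀ m v, G.dist a v = m → T.dist a v ≤ m := by
    intro m
    induction m using Nat.strong_induction_on with
    | _ m ih =>
      intro v hm
      by_cases hva : v = a
      · subst hva; simp [SimpleGraph.dist_self]
      · have hp := hpar v hva
        have h1 : T.dist a (par v) ≤ m - 1 := ih (m - 1) (by omega) _ (by omega)
        have h2 : T.dist (par v) v ≤ 1 := by
          have := dist_le (Walk.cons (hadjpar v hva).symm Walk.nil)
          simpa using this
        have h3 := hTconn.dist_triangle (u := a) (v := par v) (w := v)
        omega
  have hTdist : ∀ v, T.dist a v = G.dist a v := by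
    intro v
    refine le_antisymm (hTdist_le _ v rfl) ?_
    obtain ⟨p, hp⟩ := hTconn.exists_walk_length_eq_dist a v
    have := dist_le (p.mapLe hle)
    rwa [Walk.length_map, hp] at this
  have hTacyc : T.IsAcyclic := by
    intro b q hq
    obtain ⟨m, hmmem, hmax⟩ := q.support.toFinset.exists_max_image (G.dist a)
      ⟨b, List.mem_toFinset.mpr q.start_mem_support⟩
    rw [List.mem_toFinset] at hmmem
    have hmax' : ∀ z ∈ q.support, G.dist a z ≤ G.dist a m := fun z hz =>
      hmax z (List.mem_toFinset.mpr hz)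
    set q' := q.rotate m hmmem with hq'def
    have hq' : q'.IsCycle := hq.rotate hmmem
    have hlenq : q'.length = q.length := by
      have h2 := (q.support_rotate m hmmem).perm.length_eq
      rw [← hq'def] at h2
      have h3 := Walk.length_support q
      have h4 := Walk.length_support q'
      simp only [List.length_tail] at h2
      omega
    have hmax'' : ∀ z ∈ q'.support, G.dist a z ≤ G.dist a m := by
      intro z hz
      rcases (q'.mem_support_iff).mp hz with rfl | hz'
      · exact le_refl _
      · exact hmax' z (List.mem_of_mem_tail ((q.support_rotate m hmmem).mem_iff.mp hz'))
    have hL3 : 3 ≤ q'.length := hq'.three_le_length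
    set x := q'.getVert 1 with hxdef
    set y := q'.getVert (q'.length - 1) with hydef
    have hadj1 : T.Adj m x := by
      have := q'.adj_getVert_succ (i := 0) (by omega)
      simpa using this
    have hadjy : T.Adj y m := by
      have h5 := q'.adj_getVert_succ (i := q'.length - 1) (by omega)
      have he : q'.length - 1 + 1 = q'.length := by omega
      rw [he, Walk.getVert_length] at h5
      exact h5
    have hxmem : x ∈ q'.support := aux_getVert_mem_support _ (by omega)
    have hymem : y ∈ q'.support := aux_getVert_mem_support _ (by omega)
    have hxm : par m = x := by
      rcases (hTadj m x).mp hadj1 with ⟨hne, h | h⟩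
      · exact h
      · exfalso
        by_cases hxa : x = a
        · rw [hxa, hpa] at h; exact hne (h ▸ hxa.symm)
        · have h6 := (hpar x hxa).2
          rw [h] at h6
          have := hmax'' x hxmem
          omega
    have hym : par m = y := by
      rcases (hTadj y m).mp hadjy with ⟨hne, h | h⟩
      · exfalso
        by_cases hya : y = a
        · rw [hya, hpa] at h; exact hne (h ▸ hya)
        · have h6 := (hpar y hya).2
          rw [h] at h6
          have := hmax'' y hymem
          omega
      · exact h
    have hxy : x ≠ y := by
      intro hE
      have := aux_cycle_getVert_inj hq' (i := 1) (j := q'.length - 1)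
        (by omega) (by omega) (by omega) (by omega) hE
      omega
    exact hxy (hxm ▸ hym)
  exact ⟨hle, ⟨hTconn, hTacyc⟩, hTdist⟩

lemma aux_dist (hG : G.Connected) {a : V} (c : G.Walk a a) (n : ℕ)
    (hg : G.girth = 2 * n + 1) (hlen : c.length = 2 * n + 1) :
    ∀ i, i ≤ 2 * n + 1 → G.dist a (c.getVert i) = min i (2 * n + 1 - i) := by
  have htop : G.egirth ≠ ⊤ := by
    intro h
    rw [girth, h] at hg
    simp at hg
  have hegirth : G.egirth = ((2 * n + 1 : ℕ) : ℕ∞) := by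
    rw [← hg, girth, ENat.coe_toNat htop]
  have hcyc_ge : ∀ (b : V) (q : G.Walk b b), q.IsCycle → 2 * n + 1 ≤ q.length := by
    intro b q hq
    have h := (le_egirth.mp le_rfl) b q hq
    rw [hegirth] at h
    exact_mod_cast h
  have wTo : ∀ i, i ≤ 2 * n + 1 → ∃ w : G.Walk a (c.getVert i), w.length = i := by
    intro i
    induction i with
    | zero => exact fun _ => ⟨Walk.nil.copy rfl (c.getVert_zero).symm, by simp⟩
    | succ k ih =>
      intro hk
      obtain ⟨w, hw⟩ := ih (by omega)
      exact ⟨w.concat (c.adj_getVert_succ (by omega)), by simp [Walk.length_concat, hw]⟩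
  have wFrom : ∀ i, i ≤ 2 * n + 1 → ∃ w : G.Walk (c.getVert i) a, w.length = 2 * n + 1 - i := by
    have key : ∀ j, ∀ i, i ≤ 2 * n + 1 → 2 * n + 1 - i = j →
        ∃ w : G.Walk (c.getVert i) a, w.length = 2 * n + 1 - i := by
      intro j
      induction j with
      | zero =>
        intro i hi hij
        have hieq : i = 2 * n + 1 := by omega
        subst hieq
        have hvl : c.getVert (2 * n + 1) = a := by rw [← hlen]; exact c.getVert_length
        exact ⟨Walk.nil.copy hvl.symm rfl, by simp⟩
      | succ k ih =>
        intro i hi hij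
        obtain ⟨w, hw⟩ := ih (i + 1) (by omega) (by omega)
        have hadj := c.adj_getVert_succ (i := i) (by omega)
        exact ⟨Walk.cons hadj w, by simp [hw]; omega⟩
    intro i hi
    exact key (2 * n + 1 - i) i hi rfl
  intro i hi
  have ub1 : G.dist a (c.getVert i) ≤ i := by
    obtain ⟨w, hw⟩ := wTo i hi
    have := dist_le w
    omega
  have ub2 : G.dist a (c.getVert i) ≤ 2 * n + 1 - i := by
    obtain ⟨w, hw⟩ := wFrom i hi
    have := dist_le w
    rw [SimpleGraph.dist_comm] at this
    omega
  refine le_antisymm (by omega) ?_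
  by_contra hlt
  push_neg at hlt
  obtain ⟨P, hP⟩ := hG.exists_walk_length_eq_dist a (c.getVert i)
  obtain ⟨w1, hw1⟩ := wTo i hi
  obtain ⟨w2, hw2⟩ := wFrom i hi
  by_cases hpar : (i + G.dist a (c.getVert i)) % 2 = 1
  · obtain ⟨b, q, hq, hlq⟩ := aux_odd_closed (w1.append P.reverse)
      (by rw [Walk.length_append, Walk.length_reverse, hw1, hP]; omega)
    have h1 := hcyc_ge b q hq
    rw [Walk.length_append, Walk.length_reverse, hw1, hP] at hlq
    omega
  · obtain ⟨b, q, hq, hlq⟩ := aux_odd_closed (P.append w2)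
      (by rw [Walk.length_append, hw2, hP]; omega)
    have h1 := hcyc_ge b q hq
    rw [Walk.length_append, hw2, hP] at hlq
    omega

end AuxLemmas

/-- `T` is a breadth-first-search (distance-preserving) spanning tree of `G` rooted at `x`. -/
def IsBFSTree {V : Type*} (G T : SimpleGraph V) (x : V) : Prop :=
  T ≤ G ∧ T.IsTree ∧ ∀ v : V, T.dist x v = G.dist x v

/-- `c` is the fundamental cycle of the non-tree edge `e` with respect to `T`. -/
def IsFundCycle {V : Type*} (G T : SimpleGraph V) {a : V} (c : G.Walk a a)
    (e : Sym2 V) : Prop :=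
  c.IsCycle ∧ e ∈ G.edgeSet ∧ e ∉ T.edgeSet ∧ e ∈ c.edges ∧
    ∀ f ∈ c.edges, f = e ∨ f ∈ T.edgeSet

/-- In a connected graph of odd girth `2n+1`, every cycle of length `2n+1` is a fundamental
cycle of some BFS tree rooted at a vertex of the cycle. -/
theorem shortest_odd_cycle_is_fundamental_at_cycle_vertex
    {V : Type*} [Fintype V] (G : SimpleGraph V) (hG : G.Connected)
    (n : ℕ) (hg : G.girth = 2 * n + 1)
    {a : V} (c : G.Walk a a) (hc : c.IsCycle) (hlen : c.length = 2 * n + 1) :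
    ∃ x ∈ c.support, ∃ T : SimpleGraph V, IsBFSTree G T x ∧
      ∃ e : Sym2 V, IsFundCycle G T c e := by
  classical
  have hnotacyc : ¬ G.IsAcyclic := fun h => h c hc
  have hn1 : 1 ≤ n := by have := G.three_le_girth hnotacyc; omega
  have hdist := aux_dist hG c n hg hlen
  have hinj : ∀ {i j : ℕ}, 1 ≤ i → i ≤ 2 * n + 1 → 1 ≤ j → j ≤ 2 * n + 1 →
      c.getVert i = c.getVert j → i = j := by
    intro i j h1 h2 h3 h4 h5
    exact aux_cycle_getVert_inj hc h1 (by rw [hlen]; omega) h3 (by rw [hlen]; omega) h5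
  have hvl : c.getVert (2 * n + 1) = a := by rw [← hlen]; exact c.getVert_length
  have hne_a : ∀ i, 1 ≤ i → i ≤ 2 * n → c.getVert i ≠ a := by
    intro i h1 h2 hEq
    have := hinj h1 (by omega) (by omega : 1 ≤ 2 * n + 1) le_rfl (by rw [hEq, hvl])
    omega
  obtain ⟨par, hpa, hP3, hP4, hP1⟩ :
      ∃ par : V → V, par a = a ∧
        (∀ k, 1 ≤ k → k ≤ n → par (c.getVert k) = c.getVert (k - 1)) ∧
        (∀ k, n + 1 ≤ k → k ≤ 2 * n → par (c.getVert k) = c.getVert (k + 1)) ∧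
        (∀ v, v ≠ a → G.Adj v (par v) ∧ G.dist a (par v) + 1 = G.dist a v) := by
    refine ⟨fun v =>
      if h1 : ∃ i, 1 ≤ i ∧ i ≤ n ∧ c.getVert i = v then c.getVert (h1.choose - 1)
      else if h2 : ∃ i, n + 1 ≤ i ∧ i ≤ 2 * n ∧ c.getVert i = v then c.getVert (h2.choose + 1)
      else if h3 : v = a then v
      else (aux_parent hG a v h3).choose, ?_, ?_, ?_, ?_⟩
    · dsimp only
      rw [dif_neg, dif_neg, dif_pos rfl]
      · rintro ⟨i, hi1, hi2, hieq⟩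
        exact hne_a i (by omega) (by omega) hieq
      · rintro ⟨i, hi1, hi2, hieq⟩
        exact hne_a i (by omega) (by omega) hieq
    · intro k hk1 hk2
      dsimp only
      have hex : ∃ i, 1 ≤ i ∧ i ≤ n ∧ c.getVert i = c.getVert k := ⟨k, hk1, hk2, rfl⟩
      rw [dif_pos hex]
      obtain ⟨hj1, hj2, hj3⟩ := hex.choose_spec
      have : hex.choose = k := hinj hj1 (by omega) hk1 (by omega) hj3
      rw [this]
    · intro k hk1 hk2
      dsimp only
      have hn1' : ¬ ∃ i, 1 ≤ i ∧ i ≤ n ∧ c.getVert i = c.getVert k := by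
        rintro ⟨i, hi1, hi2, hieq⟩
        have := hinj hi1 (by omega) (by omega : 1 ≤ k) (by omega) hieq
        omega
      have hex : ∃ i, n + 1 ≤ i ∧ i ≤ 2 * n ∧ c.getVert i = c.getVert k :=
        ⟨k, hk1, hk2, rfl⟩
      rw [dif_neg hn1', dif_pos hex]
      obtain ⟨hj1, hj2, hj3⟩ := hex.choose_spec
      have : hex.choose = k := hinj (by omega) (by omega) (by omega) (by omega) hj3
      rw [this]
    · intro v hv
      dsimp only
      by_cases h1 : ∃ i, 1 ≤ i ∧ i ≤ n ∧ c.getVert i = v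
      · rw [dif_pos h1]
        have hspec := h1.choose_spec
        generalize hgen : h1.choose = j at hspec ⊢
        obtain ⟨hj1, hj2, hj3⟩ := hspec
        subst hj3
        constructor
        · have hadj := c.adj_getVert_succ (i := j - 1) (by rw [hlen]; omega)
          have hj : j - 1 + 1 = j := by omega
          rw [hj] at hadj
          exact hadj.symm
        · have d1 := hdist (j - 1) (by omega)
          have d2 := hdist j (by omega)
          omega
      · rw [dif_neg h1]
        by_cases h2 : ∃ i, n + 1 ≤ i ∧ i ≤ 2 * n ∧ c.getVert i = v
        · rw [dif_pos h2]
          have hspec := h2.choose_spec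
          generalize hgen : h2.choose = j at hspec ⊢
          obtain ⟨hj1, hj2, hj3⟩ := hspec
          subst hj3
          constructor
          · exact c.adj_getVert_succ (by rw [hlen]; omega)
          · have d1 := hdist (j + 1) (by omega)
            have d2 := hdist j (by omega)
            omega
        · rw [dif_neg h2, dif_neg hv]
          exact (aux_parent hG a v hv).choose_spec
  obtain ⟨hle, hTree, hTdist⟩ := aux_tree hG a par hpa hP1
  have dvn : G.dist a (c.getVert n) = n := by have := hdist n (by omega); omega
  have dvn1 : G.dist a (c.getVert (n + 1)) = n := by have := hdist (n + 1) (by omega); omega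
  refine ⟨a, c.start_mem_support, fromRel (fun u v => par u = v), ⟨hle, hTree, hTdist⟩,
    s(c.getVert n, c.getVert (n + 1)), hc,
    (mem_edgeSet _).mpr (c.adj_getVert_succ (by rw [hlen]; omega)), ?_, aux_mem_edges c (by rw [hlen]; omega), ?_⟩
  · intro hmem
    have hAdj := (mem_edgeSet _).mp hmem
    rw [fromRel_adj] at hAdj
    rcases hAdj with ⟨hne, h | h⟩
    · have hna : c.getVert n ≠ a := hne_a n hn1 (by omega)
      have := (hP1 _ hna).2
      rw [h, dvn1, dvn] at this
      omega
    · have hna : c.getVert (n + 1) ≠ a := hne_a (n + 1) (by omega) (by omega)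
      have := (hP1 _ hna).2
      rw [h, dvn1, dvn] at this
      omega
  · intro f hf
    obtain ⟨i, hi, rfl⟩ := aux_edges_mem c hf
    rw [hlen] at hi
    rcases lt_trichotomy i n with hcase | hcase | hcase
    · right
      rw [mem_edgeSet, fromRel_adj]
      have d1 := hdist i (by omega)
      have d2 := hdist (i + 1) (by omega)
      refine ⟨fun hEq => by rw [hEq] at d1; omega, Or.inr ?_⟩
      have := hP3 (i + 1) (by omega) (by omega)
      simpa using this
    · left; rw [hcase]
    · right
      rw [mem_edgeSet, fromRel_adj]
      have d1 := hdist i (by omega)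
      have d2 := hdist (i + 1) (by omega)
      refine ⟨fun hEq => by rw [hEq] at d1; omega, Or.inl ?_⟩
      exact hP4 i (by omega) (by omega)
end

section
/- Let G be a connected simple graph. Every shortest even cycle of G (a cycle of minimum length among all even-length cycles) either is a fundamental cycle of a BFS tree rooted at one of its vertices, or is the edge-symmetric-difference of two fundamental cycles of BFS trees of G. -/
open SimpleGraph

open Walk

namespace SECAux

variable {V : Type*} {G : SimpleGraph V}

/-- Initial segment of a walk. -/
def seg : {u v : V} → (p : G.Walk u v) → (n : ℕ) → G.Walk u (p.getVert n)
  | _, _, p, 0 => Walk.nil.copy rfl (p.getVert_zero).symm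
  | _, _, Walk.nil, _ + 1 => Walk.nil
  | _, _, Walk.cons h q, n + 1 => Walk.cons h (seg q n)

@[simp] lemma length_seg {u v : V} (p : G.Walk u v) (n : ℕ) :
    (seg p n).length = min n p.length := by
  induction p generalizing n with
  | nil => cases n <;> simp [seg]
  | cons h q ih =>
    cases n with
    | zero => simp [seg]
    | succ n => simp [seg, ih, Nat.succ_min_succ]

@[simp] lemma edges_seg {u v : V} (p : G.Walk u v) (n : ℕ) :
    (seg p n).edges = p.edges.take n := by
  induction p generalizing n with
  | nil => cases n <;> simp [seg]
  | cons h q ih =>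
    cases n with
    | zero => simp [seg]
    | succ n => simp [seg, ih]

@[simp] lemma support_seg {u v : V} (p : G.Walk u v) (n : ℕ) :
    (seg p n).support = p.support.take (n + 1) := by
  induction p generalizing n with
  | nil => cases n <;> simp [seg]
  | cons h q ih =>
    cases n with
    | zero => simp [seg]
    | succ n => simp [seg, ih]

@[simp] lemma length_drop {u v : V} (p : G.Walk u v) (n : ℕ) :
    (p.drop n).length = p.length - n := by
  induction p generalizing n with
  | nil => cases n <;> simp [Walk.drop]
  | cons h q ih =>
    cases n with
    | zero => simp [Walk.drop]
    | succ n => simp [Walk.drop, ih]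

@[simp] lemma edges_drop {u v : V} (p : G.Walk u v) (n : ℕ) :
    (p.drop n).edges = p.edges.drop n := by
  induction p generalizing n with
  | nil => cases n <;> simp [Walk.drop]
  | cons h q ih =>
    cases n with
    | zero => simp [Walk.drop]
    | succ n => simp [Walk.drop, ih]

@[simp] lemma support_drop {u v : V} (p : G.Walk u v) (n : ℕ) (hn : n ≤ p.length) :
    (p.drop n).support = p.support.drop n := by
  induction p generalizing n with
  | nil => cases n with
    | zero => simp [Walk.drop]
    | succ n => simp at hn
  | cons h q ih =>
    cases n with
    | zero => simp [Walk.drop]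
    | succ n =>
      simp only [Walk.drop, support_copy, support_cons, List.drop_succ_cons]
      exact ih n (by simpa using hn)

lemma getVert_drop {u v : V} (p : G.Walk u v) (n i : ℕ) :
    (p.drop n).getVert i = p.getVert (n + i) := by
  induction p generalizing n i with
  | nil => cases n <;> simp [Walk.drop, Walk.getVert]
  | cons h q ih =>
    cases n with
    | zero => simp [Walk.drop]
    | succ n =>
      simp only [Walk.drop, getVert_copy]
      refine (ih n i).trans ?_
      have : n + 1 + i = (n + i) + 1 := by omega
      rw [this, getVert_cons_succ]

/-- The `i`-th element of the support is `getVert i`. -/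
lemma support_getElem? {u v : V} (p : G.Walk u v) (i : ℕ) (hi : i ≤ p.length) :
    p.support[i]? = some (p.getVert i) := by
  induction p generalizing i with
  | nil =>
    have : i = 0 := by simpa using hi
    subst this
    simp [Walk.getVert]
  | cons h q ih =>
    cases i with
    | zero => simp
    | succ i =>
      simp only [support_cons, List.getElem?_cons_succ, getVert_cons_succ]
      exact ih i (by simpa using hi)


/-- membership by index -/
lemma mem_list_iff {α : Type*} (l : List α) (e : α) : e ∈ l ↔ ∃ i : ℕ, l[i]? = some e :=
  List.mem_iff_getElem?

lemma seg_getElem? {u v : V} (p : G.Walk u v) (i : ℕ) (hi : i ≤ p.length) :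
    p.support[i]? = some (p.getVert i) := support_getElem? p i hi

/-- Injectivity of `getVert` on a cycle. -/
lemma cyc_getVert_inj {x : V} {z : G.Walk x x} (hz : z.IsCycle) {i j : ℕ}
    (hi : i ≤ z.length) (hj : j ≤ z.length) (h : z.getVert i = z.getVert j) :
    i = j ∨ (i = 0 ∧ j = z.length) ∨ (i = z.length ∧ j = 0) := by
  have hm := hz.three_le_length
  have htail : z.support.tail.Nodup := hz.support_nodup
  have hsupp : ∀ k, 1 ≤ k → k ≤ z.length → z.support.tail[k-1]? = some (z.getVert k) := by
    intro k hk1 hk2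
    have := support_getElem? z k hk2
    rcases z.support.eq_nil_or_concat with h' | _
    · simp [h'] at this
    · cases hs : z.support with
      | nil => simp [hs] at this
      | cons a t =>
        rw [hs] at this
        obtain ⟨k', rfl⟩ : ∃ k', k = k' + 1 := ⟨k - 1, by omega⟩
        simpa using this
  have hlen : z.support.tail.length = z.length := by
    have := z.length_support
    cases hs : z.support with
    | nil => simp [hs] at this
    | cons a t => rw [hs] at this; simp at this ⊢; omega
  -- main case analysis
  rcases Nat.eq_zero_or_pos i with rfl | hi1 <;> rcases Nat.eq_zero_or_pos j with rfl | hj1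
  · left; rfl
  · -- i = 0 : getVert j = x = getVert z.length
    by_cases hjm : j = z.length
    · right; left; exact ⟨rfl, hjm⟩
    · exfalso
      have h1 := hsupp j hj1 hj
      have h2 := hsupp z.length (by omega) le_rfl
      rw [z.getVert_length] at h2
      rw [← h, z.getVert_zero] at h1
      have := (List.getElem?_inj (by omega : j - 1 < z.support.tail.length) htail).mp
        (h1.trans h2.symm)
      omega
  · by_cases him : i = z.length
    · right; right; exact ⟨him, rfl⟩
    · exfalso
      have h1 := hsupp i hi1 hi
      have h2 := hsupp z.length (by omega) le_rfl
      rw [z.getVert_length] at h2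
      rw [h, z.getVert_zero] at h1
      have := (List.getElem?_inj (by omega : i - 1 < z.support.tail.length) htail).mp
        (h1.trans h2.symm)
      omega
  · left
    have h1 := hsupp i hi1 hi
    have h2 := hsupp j hj1 hj
    rw [h] at h1
    have := (List.getElem?_inj (by omega : i - 1 < z.support.tail.length) htail).mp
      (h1.trans h2.symm)
    omega

/-- Characterisation of edges of a walk by indices. -/
lemma mem_edges_iff {u v : V} (p : G.Walk u v) (e : Sym2 V) :
    e ∈ p.edges ↔ ∃ i, i < p.length ∧ s(p.getVert i, p.getVert (i+1)) = e := by
  induction e using Sym2.ind with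
  | _ a b =>
    rw [← Walk.mem_edges_toSubgraph, Subgraph.mem_edgeSet, Walk.toSubgraph_adj_iff]
    tauto

/-- The edge list of a walk, by index. -/
lemma edges_getElem? {u v : V} (p : G.Walk u v) (i : ℕ) (hi : i < p.length) :
    p.edges[i]? = some s(p.getVert i, p.getVert (i+1)) := by
  induction p generalizing i with
  | nil => simp at hi
  | cons h q ih =>
    cases i with
    | zero => simp
    | succ i =>
      simp only [edges_cons, List.getElem?_cons_succ, getVert_cons_succ]
      exact ih i (by simpa using hi)

lemma glue_cycle {u v : V} (q r : G.Walk u v) (hq : q.IsPath) (hr : r.IsPath) (hne : u ≠ v)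
    (hE : ∀ e ∈ q.edges, e ∉ r.edges)
    (hsup : ∀ w ∈ q.support, w ∈ r.support → w = u ∨ w = v) :
    (q.append r.reverse).IsCycle := by
  have hq1 : 0 < q.length := by
    rcases Nat.eq_zero_or_pos q.length with h0 | h; · exact absurd (Walk.eq_of_length_eq_zero h0) hne
    · exact h
  constructor
  case isCircuit =>
    constructor
    case ne_nil =>
      intro h
      have := congrArg Walk.length h
      simp only [Walk.length_append, Walk.length_reverse, Walk.length_nil] at this
      omega
    case isTrail =>
      constructor
      rw [Walk.edges_append, Walk.edges_reverse]
      refine List.Nodup.append hq.isTrail.edges_nodup (by rw [List.nodup_reverse]; exact hr.isTrail.edges_nodup) ?_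
      intro e he he'
      exact hE e he (by simpa using he')
  case support_nodup =>
    have hqs : q.support = u :: q.support.tail := q.support_eq_cons
    have hrs : r.reverse.support = v :: r.reverse.support.tail := r.reverse.support_eq_cons
    rw [Walk.support_append, hqs]
    simp only [List.cons_append, List.tail_cons]
    refine List.Nodup.append ((List.tail_sublist _).nodup hq.support_nodup)
      ((List.tail_sublist _).nodup hr.reverse.support_nodup) ?_
    intro w hw hw'
    have hw1 : w ∈ q.support := by rw [hqs]; exact List.mem_cons_of_mem _ hw
    have hw2 : w ∈ r.support := by
      have : w ∈ r.reverse.support := by rw [hrs]; exact List.mem_cons_of_mem _ hw'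
      simpa using this
    rcases hsup w hw1 hw2 with rfl | rfl
    · exact (List.nodup_cons.mp (hqs ▸ hq.support_nodup)).1 hw
    · exact (List.nodup_cons.mp (hrs ▸ hr.reverse.support_nodup)).1 hw'

lemma nodup_of_getElem? {α : Type*} {l : List α}
    (h : ∀ i j, i < l.length → j < l.length → l[i]? = l[j]? → i = j) : l.Nodup := by
  rw [List.nodup_iff_injective_get]
  rintro ⟨i, hi⟩ ⟨j, hj⟩ hij
  apply Fin.ext
  exact h i j hi hj (by
    rw [List.getElem?_eq_getElem hi, List.getElem?_eq_getElem hj]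
    simpa using hij)

lemma mem_support_of_getVert {u : V} (z : G.Walk u u) (i : ℕ) (hi : i ≤ z.length) :
    z.getVert i ∈ z.support := by
  rw [Walk.mem_support_iff_exists_getVert]
  exact ⟨i, rfl, hi⟩

/-- No edge of a strict shortcut is an edge of the cycle. -/
lemma shortcut_edges_disjoint {x : V} {z : G.Walk x x} (hz : z.IsCycle) {a b : ℕ}
    (hab : a < b) (hbm : b < z.length)
    {p : G.Walk (z.getVert a) (z.getVert b)} (hpl : 0 < p.length)
    (hlt : p.length < min (b - a) (z.length - (b - a)))
    (hdisj : ∀ w ∈ p.support, w ∈ z.support → w = z.getVert a ∨ w = z.getVert b) :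
    ∀ e ∈ z.edges, e ∉ p.edges := by
  have hm := hz.three_le_length
  intro e hez hep
  obtain ⟨i, hi, hie⟩ := (mem_edges_iff z e).mp hez
  subst hie
  have h1 : z.getVert i ∈ p.support := p.fst_mem_support_of_mem_edges hep
  have h2 : z.getVert (i+1) ∈ p.support := p.snd_mem_support_of_mem_edges hep
  have hne : z.getVert i ≠ z.getVert (i+1) := (z.adj_getVert_succ hi).ne
  have hz1 := hdisj _ h1 (mem_support_of_getVert z i (by omega))
  have hz2 := hdisj _ h2 (mem_support_of_getVert z (i+1) (by omega))
  rcases hz1 with h1a | h1b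
  · rcases hz2 with h2a | h2b
    · exact hne (h1a.trans h2a.symm)
    · have e1 := cyc_getVert_inj hz (by omega : i ≤ z.length) (by omega : a ≤ z.length) h1a
      have e2 := cyc_getVert_inj hz (by omega : i+1 ≤ z.length) (by omega : b ≤ z.length) h2b
      omega
  · rcases hz2 with h2a | h2b
    · have e1 := cyc_getVert_inj hz (by omega : i ≤ z.length) (by omega : b ≤ z.length) h1b
      have e2 := cyc_getVert_inj hz (by omega : i+1 ≤ z.length) (by omega : a ≤ z.length) h2a
      omega
    · exact hne (h1b.trans h2b.symm)

set_option maxHeartbeats 1000000 in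
lemma theta {x : V} {z : G.Walk x x} (hz : z.IsCycle) {a b : ℕ} (hab : a < b) (hbm : b < z.length)
    (p : G.Walk (z.getVert a) (z.getVert b)) (hp : p.IsPath) (hpl : 0 < p.length)
    (hlt : p.length < min (b - a) (z.length - (b - a)))
    (hdisj : ∀ w ∈ p.support, w ∈ z.support → w = z.getVert a ∨ w = z.getVert b) :
    ∃ (w₁ : G.Walk (z.getVert a) (z.getVert a)) (w₂ : G.Walk (z.getVert b) (z.getVert b)),
      w₁.IsCycle ∧ w₂.IsCycle ∧ w₁.length = (b - a) + p.length ∧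
      w₂.length = (z.length - (b - a)) + p.length ∧
      {e | e ∈ z.edges} = symmDiff {e | e ∈ w₁.edges} {e | e ∈ w₂.edges} := by
  have hm := hz.three_le_length
  set m := z.length with hmdef
  have ham : a < m := by omega
  -- the two arcs
  have harc1end : (z.drop a).getVert (b-a) = z.getVert b := by
    rw [getVert_drop]; congr 1; omega
  set arc1 : G.Walk (z.getVert a) (z.getVert b) := (seg (z.drop a) (b-a)).copy rfl harc1end
    with harc1
  set arc2 : G.Walk (z.getVert b) (z.getVert a) := (z.drop b).append (seg z a) with harc2
  -- lengths
  have hlen1 : arc1.length = b - a := by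
    simp only [harc1, Walk.length_copy, length_seg, length_drop]; omega
  have hlen2 : arc2.length = (m - b) + a := by
    simp only [harc2, Walk.length_append, length_drop, length_seg]; omega
  -- supports
  have hsup1 : arc1.support = (z.support.drop a).take (b - a + 1) := by
    simp only [harc1, Walk.support_copy, support_seg, support_drop z a (by omega)]
  have hsup2 : arc2.support = (z.support.drop b) ++ ((z.support.take (a+1)).tail) := by
    simp only [harc2, Walk.support_append, support_drop z b (by omega), support_seg]
  have hslen : z.support.length = m + 1 := by simp [Walk.length_support]; omega
  -- supports are subsets of the cycle support
  have hsub1 : ∀ w ∈ arc1.support, w ∈ z.support := by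
    intro w hw
    rw [hsup1] at hw
    exact List.mem_of_mem_drop (List.mem_of_mem_take hw)
  have hsub2 : ∀ w ∈ arc2.support, w ∈ z.support := by
    intro w hw
    rw [hsup2] at hw
    rcases List.mem_append.mp hw with h | h
    · exact List.mem_of_mem_drop h
    · exact List.mem_of_mem_take (List.mem_of_mem_tail h)
  -- element formulas
  have hel1 : ∀ i, i < b - a + 1 → arc1.support[i]? = some (z.getVert (a + i)) := by
    intro i hi
    rw [hsup1, List.getElem?_take, if_pos hi, List.getElem?_drop]
    exact support_getElem? z (a+i) (by omega)
  have hel2a : ∀ i, i ≤ m - b → (z.support.drop b)[i]? = some (z.getVert (b + i)) := by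
    intro i hi
    rw [List.getElem?_drop]
    exact support_getElem? z (b+i) (by omega)
  have hel2b : ∀ j, j < a → ((z.support.take (a+1)).tail)[j]? = some (z.getVert (j+1)) := by
    intro j hj
    rw [List.getElem?_tail, List.getElem?_take, if_pos (by omega)]
    exact support_getElem? z (j+1) (by omega)
  have hlen2a : (z.support.drop b).length = m - b + 1 := by
    rw [List.length_drop, hslen]; omega
  have hlen2b : ((z.support.take (a+1)).tail).length = a := by
    rw [List.length_tail, List.length_take, hslen]; omega
  -- arcs are paths
  have hpath1 : arc1.IsPath := by
    rw [Walk.isPath_def]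
    apply nodup_of_getElem?
    intro i j hi hj hij
    have hL : arc1.support.length = b - a + 1 := by
      rw [hsup1, List.length_take, List.length_drop, hslen]; omega
    rw [hL] at hi hj
    rw [hel1 i hi, hel1 j hj] at hij
    have := cyc_getVert_inj hz (by omega : a+i ≤ z.length) (by omega : a+j ≤ z.length)
      (by simpa using hij)
    omega
  have hpath2 : arc2.IsPath := by
    rw [Walk.isPath_def, hsup2]
    refine List.Nodup.append ?_ ?_ ?_
    · apply nodup_of_getElem?
      intro i j hi hj hij
      rw [hlen2a] at hi hj
      rw [hel2a i (by omega), hel2a j (by omega)] at hij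
      have := cyc_getVert_inj hz (by omega : b+i ≤ z.length) (by omega : b+j ≤ z.length)
        (by simpa using hij)
      omega
    · apply nodup_of_getElem?
      intro i j hi hj hij
      rw [hlen2b] at hi hj
      rw [hel2b i hi, hel2b j hj] at hij
      have := cyc_getVert_inj hz (by omega : i+1 ≤ z.length) (by omega : j+1 ≤ z.length)
        (by simpa using hij)
      omega
    · intro w hw hw'
      obtain ⟨i, hi⟩ := (mem_list_iff _ w).mp hw
      obtain ⟨j, hj⟩ := (mem_list_iff _ w).mp hw'
      have hi' : i < m - b + 1 := by
        by_contra hcon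
        rw [List.getElem?_eq_none (by omega : (z.support.drop b).length ≤ i)] at hi
        exact absurd hi.symm (Option.some_ne_none _)
      have hj' : j < a := by
        by_contra hcon
        rw [List.getElem?_eq_none (by omega : ((z.support.take (a+1)).tail).length ≤ j)] at hj
        exact absurd hj.symm (Option.some_ne_none _)
      rw [hel2a i (by omega)] at hi
      rw [hel2b j hj'] at hj
      have : z.getVert (b+i) = z.getVert (j+1) := by
        have := hi.trans hj.symm
        simpa using this
      have := cyc_getVert_inj hz (by omega : b+i ≤ z.length) (by omega : j+1 ≤ z.length) this
      omega
  -- edges of arcs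
  have hedge1 : arc1.edges = (z.edges.drop a).take (b - a) := by
    simp only [harc1, Walk.edges_copy, edges_seg, edges_drop]
  have hedge2 : arc2.edges = z.edges.drop b ++ z.edges.take a := by
    simp only [harc2, Walk.edges_append, edges_drop, edges_seg]
  have hElen : z.edges.length = m := by simp [Walk.length_edges]; omega
  -- arcs' edges are cycle edges
  have hesub1 : ∀ e ∈ arc1.edges, e ∈ z.edges := by
    intro e he; rw [hedge1] at he
    exact List.mem_of_mem_drop (List.mem_of_mem_take he)
  have hesub2 : ∀ e ∈ arc2.edges, e ∈ z.edges := by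
    intro e he; rw [hedge2] at he
    rcases List.mem_append.mp he with h | h
    · exact List.mem_of_mem_drop h
    · exact List.mem_of_mem_take h
  have hdisjE := shortcut_edges_disjoint hz hab hbm hpl hlt hdisj
  have hneab : z.getVert a ≠ z.getVert b := by
    intro h
    have := cyc_getVert_inj hz (by omega : a ≤ z.length) (by omega : b ≤ z.length) h
    omega
  -- the two cycles
  have hcyc1 : (arc1.append p.reverse).IsCycle := by
    apply glue_cycle arc1 p hpath1 hp hneab
    · intro e he; exact hdisjE e (hesub1 e he)
    · intro w hw hw'; exact hdisj w hw' (hsub1 w hw)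
  have hcyc2' : (arc2.append p.reverse.reverse).IsCycle := by
    apply glue_cycle arc2 p.reverse hpath2 hp.reverse hneab.symm
    · intro e he he'
      rw [Walk.edges_reverse, List.mem_reverse] at he'
      exact hdisjE e (hesub2 e he) he'
    · intro w hw hw'
      rw [Walk.support_reverse, List.mem_reverse] at hw'
      rcases hdisj w hw' (hsub2 w hw) with h | h
      · exact Or.inr h
      · exact Or.inl h
  rw [Walk.reverse_reverse] at hcyc2'
  refine ⟨arc1.append p.reverse, arc2.append p, hcyc1, hcyc2', ?_, ?_, ?_⟩
  · simp [Walk.length_append, hlen1]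
  · simp only [Walk.length_append, hlen2]; omega
  · -- the symmetric difference of edge sets
    ext e
    rw [Set.mem_setOf_eq, Set.mem_symmDiff]
    have hm1 : e ∈ (arc1.append p.reverse).edges ↔
        (e ∈ (z.edges.drop a).take (b-a) ∨ e ∈ p.edges) := by
      rw [Walk.edges_append, List.mem_append, hedge1, Walk.edges_reverse, List.mem_reverse]
    have hm2 : e ∈ (arc2.append p).edges ↔
        ((e ∈ z.edges.drop b ∨ e ∈ z.edges.take a) ∨ e ∈ p.edges) := by
      rw [Walk.edges_append, List.mem_append, hedge2, List.mem_append]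
    -- index extraction facts
    have hzsplit : e ∈ z.edges ↔
        (e ∈ (z.edges.drop a).take (b-a)) ∨ (e ∈ z.edges.drop b ∨ e ∈ z.edges.take a) := by
      constructor
      · intro he
        obtain ⟨i, hi⟩ := (mem_list_iff _ e).mp he
        have hiL : i < m := by
          by_contra hcon
          rw [List.getElem?_eq_none (by omega : z.edges.length ≤ i)] at hi
          exact absurd hi.symm (Option.some_ne_none _)
        by_cases h1 : i < a
        · exact Or.inr (Or.inr ((mem_list_iff _ e).mpr ⟨i, by
            rw [List.getElem?_take, if_pos h1]; exact hi⟩))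
        · by_cases h2 : i < b
          · refine Or.inl ((mem_list_iff _ e).mpr ⟨i - a, ?_⟩)
            rw [List.getElem?_take, if_pos (by omega), List.getElem?_drop]
            rw [show a + (i-a) = i by omega]; exact hi
          · refine Or.inr (Or.inl ((mem_list_iff _ e).mpr ⟨i - b, ?_⟩))
            rw [List.getElem?_drop, show b + (i-b) = i by omega]; exact hi
      · rintro (h | h | h)
        · exact List.mem_of_mem_drop (List.mem_of_mem_take h)
        · exact List.mem_of_mem_drop h
        · exact List.mem_of_mem_take h
    -- disjointness of the two arc edge lists
    have hdisj12 : ¬ (e ∈ (z.edges.drop a).take (b-a) ∧ (e ∈ z.edges.drop b ∨ e ∈ z.edges.take a)) := by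
      rintro ⟨h1, h2⟩
      obtain ⟨i, hi⟩ := (mem_list_iff _ e).mp h1
      have hiL : i < b - a := by
        by_contra hcon
        rw [List.getElem?_eq_none (by rw [List.length_take]; omega :
          ((z.edges.drop a).take (b-a)).length ≤ i)] at hi
        exact absurd hi.symm (Option.some_ne_none _)
      rw [List.getElem?_take, if_pos hiL, List.getElem?_drop] at hi
      have hnodup := hz.edges_nodup
      rcases h2 with h2 | h2
      · obtain ⟨j, hj⟩ := (mem_list_iff _ e).mp h2
        have hjL : j < m - b := by
          by_contra hcon
          rw [List.getElem?_eq_none (by rw [List.length_drop]; omega :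
            (z.edges.drop b).length ≤ j)] at hj
          exact absurd hj.symm (Option.some_ne_none _)
        rw [List.getElem?_drop] at hj
        have := (List.getElem?_inj (by omega : a + i < z.edges.length) hnodup).mp (hi.trans hj.symm)
        omega
      · obtain ⟨j, hj⟩ := (mem_list_iff _ e).mp h2
        have hjL : j < a := by
          by_contra hcon
          rw [List.getElem?_eq_none (by rw [List.length_take]; omega :
            (z.edges.take a).length ≤ j)] at hj
          exact absurd hj.symm (Option.some_ne_none _)
        rw [List.getElem?_take, if_pos hjL] at hj
        have := (List.getElem?_inj (by omega : a + i < z.edges.length) hnodup).mp (hi.trans hj.symm)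
        omega
    have hP1 : e ∈ (z.edges.drop a).take (b-a) → e ∉ p.edges := fun h =>
      hdisjE e (List.mem_of_mem_drop (List.mem_of_mem_take h))
    have hP2 : e ∈ z.edges.drop b ∨ e ∈ z.edges.take a → e ∉ p.edges := by
      rintro (h | h)
      · exact hdisjE e (List.mem_of_mem_drop h)
      · exact hdisjE e (List.mem_of_mem_take h)
    rw [Set.mem_setOf_eq, Set.mem_setOf_eq, hm1, hm2, hzsplit]
    clear hm1 hm2 hzsplit hedge1 hedge2
    tauto

/-- Cyclic distance between indices on a cycle of length `m`. -/
def D (m a b : ℕ) : ℕ := min (Nat.dist a b) (m - Nat.dist a b)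

lemma D_triangle (m a b c : ℕ) (ha : a ≤ m) (hb : b ≤ m) (hc : c ≤ m) :
    D m a c ≤ D m a b + D m b c := by
  simp only [D, Nat.dist]; omega

lemma D_eq_min {m a b : ℕ} (hab : a < b) : D m a b = min (b - a) (m - (b - a)) := by
  simp only [D, Nat.dist]; omega

lemma D_symm (m a b : ℕ) : D m a b = D m b a := by
  simp only [D, Nat.dist]; omega

lemma dist_le_cyc {x : V} (z : G.Walk x x) (i : ℕ) (hi : i ≤ z.length) :
    G.dist x (z.getVert i) ≤ min i (z.length - i) := by
  have h1 : G.dist x (z.getVert i) ≤ i := by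
    have := SimpleGraph.dist_le (seg z i)
    simpa [length_seg, Nat.min_eq_left hi] using this
  have h2 : G.dist x (z.getVert i) ≤ z.length - i := by
    rw [SimpleGraph.dist_comm]
    have := SimpleGraph.dist_le (z.drop i)
    simpa [length_drop] using this
  omega

lemma exists_shortcut (hG : G.Connected) {x : V} {z : G.Walk x x} (hz : z.IsCycle)
    (hng : ¬ ∀ i, i ≤ z.length → G.dist x (z.getVert i) = min i (z.length - i)) :
    ∃ a b, a < b ∧ b < z.length ∧ ∃ p : G.Walk (z.getVert a) (z.getVert b),
      p.IsPath ∧ 0 < p.length ∧ p.length < min (b-a) (z.length - (b-a)) ∧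
      ∀ w ∈ p.support, w ∈ z.support → w = z.getVert a ∨ w = z.getVert b := by
  classical
  have hm := hz.three_le_length
  set m := z.length with hmdef
  set P : ℕ → Prop := fun ℓ => ∃ a, a < m ∧ ∃ b, b < m ∧ a ≠ b ∧
    ∃ p : G.Walk (z.getVert a) (z.getVert b), p.length = ℓ ∧ ℓ < D m a b with hP
  have hex : ∃ ℓ, P ℓ := by
    push_neg at hng
    obtain ⟨i, hi, hne⟩ := hng
    have hle := dist_le_cyc z i hi
    have hlt : G.dist x (z.getVert i) < min i (m - i) := lt_of_le_of_ne hle hne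
    have hi0 : i ≠ 0 := by
      rintro rfl
      rw [z.getVert_zero] at hlt
      simp at hlt
    have him : i ≠ m := by
      rintro rfl
      rw [z.getVert_length] at hlt
      simp at hlt
    obtain ⟨q, hq⟩ := hG.exists_walk_length_eq_dist x (z.getVert i)
    refine ⟨G.dist x (z.getVert i), 0, by omega, i, by omega, by omega, ?_⟩
    refine ⟨q.copy z.getVert_zero.symm rfl, by simpa using hq, ?_⟩
    rw [D_eq_min (by omega : 0 < i)]
    simpa using hlt
  set ℓ₀ := Nat.find hex with hl0
  obtain ⟨a, ham, b, hbm, hab, q, hqlen, hqD⟩ := Nat.find_spec hex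
  -- replace by a path
  set p := q.bypass with hpdef
  have hple : p.length ≤ ℓ₀ := by rw [hl0, ← hqlen]; exact q.length_bypass_le
  have hpeq : p.length = ℓ₀ := by
    rcases lt_or_eq_of_le hple with h | h
    · exact absurd ⟨a, ham, b, hbm, hab, p, rfl, by omega⟩ (Nat.find_min hex h)
    · exact h
  have hppath : p.IsPath := q.bypass_isPath
  have hpD : p.length < D m a b := by rw [hpeq, hl0]; exact hqD
  have hp0 : 0 < p.length := by
    rcases Nat.eq_zero_or_pos p.length with h0 | h
    · exfalso
      have := Walk.eq_of_length_eq_zero h0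
      have hcon := cyc_getVert_inj hz (by omega : a ≤ z.length) (by omega : b ≤ z.length) this
      omega
    · exact h
  -- internal disjointness
  have hdisj : ∀ w ∈ p.support, w ∈ z.support → w = z.getVert a ∨ w = z.getVert b := by
    intro w hw hwz
    by_contra hcon
    push_neg at hcon
    obtain ⟨hwa, hwb⟩ := hcon
    obtain ⟨j0, hj0, hj0le⟩ := Walk.mem_support_iff_exists_getVert.mp hwz
    set j := if j0 = m then 0 else j0 with hj
    have hjm : j < m := by by_cases h : j0 = m <;> simp [hj, h] <;> omega
    have hjw : z.getVert j = w := by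
      by_cases h : j0 = m
      · simp only [hj, if_pos h]
        rw [z.getVert_zero, ← z.getVert_length, ← hmdef, ← h, hj0]
      · simpa [hj, h] using hj0
    have hja : j ≠ a := by rintro rfl; exact hwa hjw.symm
    have hjb : j ≠ b := by rintro rfl; exact hwb hjw.symm
    set p₁ := p.takeUntil w hw with hp1
    set p₂ := p.dropUntil w hw with hp2
    have hsum : p₁.length + p₂.length = ℓ₀ := by
      have := congrArg Walk.length (p.take_spec hw)
      rw [Walk.length_append] at this
      rw [← hp1, ← hp2] at this
      omega
    have h1pos : 0 < p₁.length := by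
      rcases Nat.eq_zero_or_pos p₁.length with h0 | h
      · exact absurd (Walk.eq_of_length_eq_zero h0).symm hwa
      · exact h
    have h2pos : 0 < p₂.length := by
      rcases Nat.eq_zero_or_pos p₂.length with h0 | h
      · exact absurd (Walk.eq_of_length_eq_zero h0) hwb
      · exact h
    have hD1 : D m a j ≤ p₁.length := by
      by_contra hlt1
      push_neg at hlt1
      exact Nat.find_min hex (show p₁.length < ℓ₀ by omega)
        ⟨a, ham, j, hjm, fun h => hja h.symm, p₁.copy rfl hjw.symm, by simp, by simpa using hlt1⟩
    have hD2 : D m j b ≤ p₂.length := by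
      by_contra hlt2
      push_neg at hlt2
      exact Nat.find_min hex (show p₂.length < ℓ₀ by omega)
        ⟨j, hjm, b, hbm, hjb, p₂.copy hjw.symm rfl, by simp, by simpa using hlt2⟩
    have := D_triangle m a j b (by omega) (by omega) (by omega)
    omega
  -- sort the endpoints
  rcases lt_or_gt_of_ne hab with h | h
  · refine ⟨a, b, h, hbm, p, hppath, hp0, ?_, hdisj⟩
    rw [← D_eq_min h]
    exact hpD
  · refine ⟨b, a, h, ham, p.reverse, hppath.reverse, by simpa using hp0, ?_, ?_⟩
    · rw [← D_eq_min h, D_symm]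
      simpa using hpD
    · intro w hw hwz
      rw [Walk.support_reverse, List.mem_reverse] at hw
      rcases hdisj w hw hwz with h' | h'
      · exact Or.inr h'
      · exact Or.inl h'

lemma exists_parent (hG : G.Connected) {x v : V} (hv : v ≠ x) :
    ∃ w, G.Adj v w ∧ G.dist x w + 1 = G.dist x v := by
  obtain ⟨q, hq⟩ := hG.exists_walk_length_eq_dist x v
  have hd0 : G.dist x v ≠ 0 := fun h => hv (hG.dist_eq_zero_iff.mp h).symm
  have hpos : 0 < q.length := by omega
  refine ⟨q.getVert (q.length - 1), ?_, ?_⟩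
  · have := q.adj_getVert_succ (i := q.length - 1) (by omega)
    rw [show q.length - 1 + 1 = q.length by omega, q.getVert_length] at this
    exact this.symm
  · have hle : G.dist x (q.getVert (q.length - 1)) ≤ q.length - 1 := by
      have := SimpleGraph.dist_le (seg q (q.length - 1))
      simpa [length_seg, Nat.min_eq_left (by omega : q.length - 1 ≤ q.length)] using this
    have hge : q.length - 1 ≤ G.dist x (q.getVert (q.length - 1)) := by
      by_contra hcon
      push_neg at hcon
      obtain ⟨r, hr⟩ := hG.exists_walk_length_eq_dist x (q.getVert (q.length - 1))
      have hadj : G.Adj (q.getVert (q.length - 1)) v := by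
        have := q.adj_getVert_succ (i := q.length - 1) (by omega)
        rw [show q.length - 1 + 1 = q.length by omega, q.getVert_length] at this
        exact this
      have := SimpleGraph.dist_le (r.concat hadj)
      rw [Walk.length_concat] at this
      omega
    omega

lemma geodesic_fund (hG : G.Connected) {x : V} (z : G.Walk x x) (hz : z.IsCycle)
    (hgeo : ∀ i, i ≤ z.length → G.dist x (z.getVert i) = min i (z.length - i)) :
    ∃ T : SimpleGraph V, IsBFSTree G T x ∧ ∃ e, IsFundCycle G T z e := by
  classical
  have hm := hz.three_le_length
  set m := z.length with hmdef
  set t := m / 2 with htdef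
  -- the parent function
  set par : V → V := fun v =>
    if h : ∃ j, 1 ≤ j ∧ j ≤ m - 1 ∧ v = z.getVert j then
      (if h.choose ≤ t then z.getVert (h.choose - 1) else z.getVert (h.choose + 1))
    else if hx : v = x then x else (exists_parent hG hx).choose
    with hpar
  -- x is not an interior cycle vertex
  have hxnot : ¬ ∃ j, 1 ≤ j ∧ j ≤ m - 1 ∧ x = z.getVert j := by
    rintro ⟨j, hj1, hj2, hje⟩
    have : z.getVert 0 = z.getVert j := by rw [z.getVert_zero]; exact hje
    have := cyc_getVert_inj hz (by omega) (by omega) this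
    omega
  have hparx : par x = x := by
    simp only [hpar]
    rw [dif_neg hxnot]
    simp
  -- value of par on interior cycle vertices
  have hparcyc : ∀ j, 1 ≤ j → j ≤ m - 1 →
      par (z.getVert j) = if j ≤ t then z.getVert (j - 1) else z.getVert (j + 1) := by
    intro j hj1 hj2
    have hex : ∃ j', 1 ≤ j' ∧ j' ≤ m - 1 ∧ z.getVert j = z.getVert j' := ⟨j, hj1, hj2, rfl⟩
    have hspec := hex.choose_spec
    have hjeq : hex.choose = j := by
      have := cyc_getVert_inj hz (by omega : j ≤ z.length)
        (by omega : hex.choose ≤ z.length) hspec.2.2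
      omega
    simp only [hpar]
    rw [dif_pos hex, hjeq]
  -- interior cycle vertices are not x
  have hcycne : ∀ j, 1 ≤ j → j ≤ m - 1 → z.getVert j ≠ x := by
    intro j hj1 hj2 h
    exact hxnot ⟨j, hj1, hj2, h.symm⟩
  -- main property of the parent function
  have hP : ∀ v, v ≠ x → G.Adj v (par v) ∧ G.dist x (par v) + 1 = G.dist x v := by
    intro v hvx
    by_cases h : ∃ j, 1 ≤ j ∧ j ≤ m - 1 ∧ v = z.getVert j
    · obtain ⟨j, hj1, hj2, rfl⟩ := h
      rw [hparcyc j hj1 hj2]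
      have hdj := hgeo j (by omega)
      by_cases hjt : j ≤ t
      · rw [if_pos hjt]
        constructor
        · have := z.adj_getVert_succ (i := j - 1) (by omega)
          rw [show j - 1 + 1 = j by omega] at this
          exact this.symm
        · have hdj' := hgeo (j-1) (by omega)
          omega
      · rw [if_neg hjt]
        constructor
        · exact z.adj_getVert_succ (by omega)
        · have hdj' := hgeo (j+1) (by omega)
          omega
    · simp only [hpar]
      rw [dif_neg h, dif_neg hvx]
      exact (exists_parent hG hvx).choose_spec
  have hPne : ∀ v, v ≠ x → v ≠ par v := fun v hv => (hP v hv).1.ne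
  -- the tree
  set S : Set (Sym2 V) := {e | ∃ v, v ≠ x ∧ e = s(v, par v)} with hS
  set T : SimpleGraph V := SimpleGraph.fromEdgeSet S with hT
  have hTadj : ∀ u w, T.Adj u w ↔ (s(u, w) ∈ S ∧ u ≠ w) := by
    intro u w; rw [hT]; exact SimpleGraph.fromEdgeSet_adj S
  have hTle : T ≤ G := by
    intro u w huw
    rw [hTadj] at huw
    obtain ⟨⟨v, hv, he⟩, hne⟩ := huw
    rcases Sym2.eq_iff.mp he with ⟨rfl, rfl⟩ | ⟨rfl, rfl⟩
    · exact (hP _ hv).1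
    · exact (hP _ hv).1.symm
  have hTedge : ∀ e, e ∈ T.edgeSet ↔ e ∈ S := by
    intro e
    rw [hT, SimpleGraph.edgeSet_fromEdgeSet]
    constructor
    · exact fun h => h.1
    · intro he
      refine ⟨he, ?_⟩
      obtain ⟨v, hv, rfl⟩ := he
      simp only [Sym2.mem_diagSet, Sym2.mk_isDiag_iff]
      exact hPne v hv
  -- reachability to the root
  have hreach : ∀ n v, G.dist x v ≤ n → T.Reachable v x := by
    intro n
    induction n with
    | zero =>
      intro v hv
      have : v = x := (hG.dist_eq_zero_iff.mp (by omega)).symm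
      exact this ▸ Reachable.refl v
    | succ n ih =>
      intro v hv
      by_cases hvx : v = x
      · exact hvx ▸ Reachable.refl v
      · have hTadjv : T.Adj v (par v) := by
          rw [hTadj]
          exact ⟨⟨v, hvx, rfl⟩, hPne v hvx⟩
        have hd := (hP v hvx).2
        have hGd : 0 < G.dist x v := by
          rcases Nat.eq_zero_or_pos (G.dist x v) with h0 | h
          · exact absurd (hG.dist_eq_zero_iff.mp h0).symm hvx
          · exact h
        exact hTadjv.reachable.trans (ih (par v) (by omega))
  have hTconn : T.Connected := by
    rw [SimpleGraph.connected_iff]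
    refine ⟨fun u v => (hreach (G.dist x u) u le_rfl).trans (hreach (G.dist x v) v le_rfl).symm,
      ⟨x⟩⟩
  -- distance preservation
  have hTdistle : ∀ n v, G.dist x v ≤ n → T.dist x v ≤ G.dist x v := by
    intro n
    induction n with
    | zero =>
      intro v hv
      have : v = x := (hG.dist_eq_zero_iff.mp (by omega)).symm
      subst this
      simp [SimpleGraph.dist_self]
    | succ n ih =>
      intro v hv
      by_cases hvx : v = x
      · subst hvx; simp [SimpleGraph.dist_self]
      · have hTadjv : T.Adj v (par v) := by
          rw [hTadj]
          exact ⟨⟨v, hvx, rfl⟩, hPne v hvx⟩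
        have hd := (hP v hvx).2
        have hGd : 0 < G.dist x v := by
          rcases Nat.eq_zero_or_pos (G.dist x v) with h0 | h
          · exact absurd (hG.dist_eq_zero_iff.mp h0).symm hvx
          · exact h
        have h1 : T.dist x v ≤ T.dist x (par v) + T.dist (par v) v :=
          hTconn.dist_triangle
        have h2 : T.dist (par v) v = 1 := SimpleGraph.dist_eq_one_iff_adj.mpr hTadjv.symm
        have h3 : T.dist x (par v) ≤ G.dist x (par v) := ih (par v) (by omega)
        omega
  have hTdist : ∀ v, T.dist x v = G.dist x v := by
    intro v
    have h1 : T.dist x v ≤ G.dist x v := hTdistle (G.dist x v) v le_rfl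
    have h2 : G.dist x v ≤ T.dist x v := by
      obtain ⟨q, hq⟩ := hTconn.exists_walk_length_eq_dist x v
      have := SimpleGraph.dist_le (q.mapLe hTle)
      simpa [hq] using this
    omega
  -- edge classification in T
  have hTedgecases : ∀ u w, T.Adj u w → (w = par u ∧ u ≠ x) ∨ (u = par w ∧ w ≠ x) := by
    intro u w huw
    rw [hTadj] at huw
    obtain ⟨⟨v, hv, he⟩, _⟩ := huw
    rcases Sym2.eq_iff.mp he with ⟨rfl, rfl⟩ | ⟨rfl, rfl⟩
    · exact Or.inl ⟨rfl, hv⟩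
    · exact Or.inr ⟨rfl, hv⟩
  -- acyclicity via the farthest vertex
  have hacyclic : T.IsAcyclic := by
    intro v q hq
    have hL := hq.three_le_length
    set L := q.length with hLdef
    obtain ⟨i₀, hi₀, hmax⟩ := (Finset.range L).exists_max_image
      (fun i => G.dist x (q.getVert i)) ⟨0, by simp; omega⟩
    rw [Finset.mem_range] at hi₀
    set iprev := if i₀ = 0 then L - 1 else i₀ - 1 with hiprev
    have hiprevL : iprev < L := by by_cases h : i₀ = 0 <;> simp [hiprev, h] <;> omega
    set u := q.getVert i₀ with hu
    set w₁ := q.getVert iprev with hw₁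
    set w₂ := q.getVert (i₀ + 1) with hw₂
    have hadj1 : T.Adj u w₁ := by
      by_cases h : i₀ = 0
      · have := q.adj_getVert_succ (i := L - 1) (by omega)
        rw [show L - 1 + 1 = L by omega, q.getVert_length] at this
        rw [hu, hw₁, hiprev, if_pos h, h, q.getVert_zero]
        exact this.symm
      · have := q.adj_getVert_succ (i := i₀ - 1) (by omega)
        rw [show i₀ - 1 + 1 = i₀ by omega] at this
        rw [hu, hw₁, hiprev, if_neg h]
        exact this.symm
    have hadj2 : T.Adj u w₂ := q.adj_getVert_succ (by omega)
    have hne12 : w₁ ≠ w₂ := by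
      intro h
      have := cyc_getVert_inj hq (by omega : iprev ≤ q.length)
        (by omega : i₀ + 1 ≤ q.length) h
      by_cases h0 : i₀ = 0
      · rw [hiprev, if_pos h0] at this; omega
      · rw [hiprev, if_neg h0] at this; omega
    have hmax1 : G.dist x w₁ ≤ G.dist x u := hmax iprev (Finset.mem_range.mpr hiprevL)
    have hmax2 : G.dist x w₂ ≤ G.dist x u := by
      by_cases h : i₀ + 1 < L
      · exact hmax (i₀+1) (Finset.mem_range.mpr h)
      · have hL' : i₀ + 1 = L := by omega
        have : w₂ = q.getVert 0 := by rw [hw₂, hL', q.getVert_length, q.getVert_zero]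
        rw [this]
        exact hmax 0 (Finset.mem_range.mpr (by omega))
    have hkey : ∀ w, T.Adj u w → G.dist x w ≤ G.dist x u → w = par u := by
      intro w hadj hle
      rcases hTedgecases u w hadj with ⟨h1, _⟩ | ⟨h1, h2⟩
      · exact h1
      · exfalso
        have := (hP w h2).2
        rw [← h1] at this
        omega
    have e1 := hkey w₁ hadj1 hmax1
    have e2 := hkey w₂ hadj2 hmax2
    exact hne12 (e1.trans e2.symm)
  -- the distinguished non-tree edge
  have ht1 : 1 ≤ t := by omega
  have htm : t + 1 ≤ m - 1 := by omega
  set e₀ : Sym2 V := s(z.getVert t, z.getVert (t+1)) with he₀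
  have hnotin : e₀ ∉ T.edgeSet := by
    rw [hTedge]
    rintro ⟨v, hv, he⟩
    rcases Sym2.eq_iff.mp he with ⟨h1, h2⟩ | ⟨h1, h2⟩
    · rw [← h1, hparcyc t ht1 (by omega), if_pos le_rfl] at h2
      have := cyc_getVert_inj hz (by omega : t - 1 ≤ z.length) (by omega : t + 1 ≤ z.length) h2.symm
      omega
    · rw [← h2, hparcyc (t+1) (by omega) htm, if_neg (by omega)] at h1
      have := cyc_getVert_inj hz (by omega : t ≤ z.length) (by omega : t + 2 ≤ z.length) h1
      omega
  have hintree : ∀ i, i < m → i ≠ t → s(z.getVert i, z.getVert (i+1)) ∈ T.edgeSet := by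
    intro i him hit
    rw [hTedge]
    by_cases h : i < t
    · refine ⟨z.getVert (i+1), hcycne (i+1) (by omega) (by omega), ?_⟩
      rw [hparcyc (i+1) (by omega) (by omega), if_pos (by omega : i + 1 ≤ t)]
      rw [show i + 1 - 1 = i by omega, Sym2.eq_swap]
    · refine ⟨z.getVert i, hcycne i (by omega) (by omega), ?_⟩
      rw [hparcyc i (by omega) (by omega), if_neg (by omega)]
  refine ⟨T, ⟨hTle, ⟨hTconn, hacyclic⟩, hTdist⟩, e₀, hz, ?_, hnotin, ?_, ?_⟩
  · rw [SimpleGraph.mem_edgeSet]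
    exact z.adj_getVert_succ (by omega)
  · exact (mem_edges_iff z e₀).mpr ⟨t, by omega, rfl⟩
  · intro f hf
    obtain ⟨i, him, rfl⟩ := (mem_edges_iff z f).mp hf
    by_cases h : i = t
    · subst h; exact Or.inl rfl
    · exact Or.inr (hintree i him h)

end SECAux

/-- Every shortest even cycle of a connected graph is either a fundamental cycle of a BFS
tree rooted at one of its vertices, or the edge-symmetric-difference of two fundamental
cycles of BFS trees. -/
theorem shortest_even_cycle_structure
    {V : Type*} [Fintype V] (G : SimpleGraph V) (hG : G.Connected)
    {a : V} (c : G.Walk a a) (hc : c.IsCycle) (heven : Even c.length)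
    (hmin : ∀ (b : V) (w : G.Walk b b), w.IsCycle → Even w.length → c.length ≤ w.length) :
    (∃ x ∈ c.support, ∃ T : SimpleGraph V, IsBFSTree G T x ∧
        ∃ e : Sym2 V, IsFundCycle G T c e) ∨
    (∃ (x y : V) (T₁ T₂ : SimpleGraph V) (b₁ b₂ : V)
        (c₁ : G.Walk b₁ b₁) (c₂ : G.Walk b₂ b₂) (e₁ e₂ : Sym2 V),
      IsBFSTree G T₁ x ∧ IsBFSTree G T₂ y ∧
      IsFundCycle G T₁ c₁ e₁ ∧ IsFundCycle G T₂ c₂ e₂ ∧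
      {e | e ∈ c.edges} = symmDiff {e | e ∈ c₁.edges} {e | e ∈ c₂.edges}) := by
  classical
  by_cases hgeo : ∀ i, i ≤ c.length → G.dist a (c.getVert i) = min i (c.length - i)
  · left
    obtain ⟨T, hT, e, he⟩ := SECAux.geodesic_fund hG c hc hgeo
    exact ⟨a, c.start_mem_support, T, hT, e, he⟩
  · right
    obtain ⟨a₁, b₁, hab, hbm, p, hp, hp0, hplt, hpdisj⟩ := SECAux.exists_shortcut hG hc hgeo
    obtain ⟨w₁, w₂, hw₁, hw₂, hl₁, hl₂, hsym⟩ := SECAux.theta hc hab hbm p hp hp0 hplt hpdisj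
    have hlen1 : w₁.length < c.length := by omega
    have hlen2 : w₂.length < c.length := by omega
    have hshort : ∀ (y : V) (w : G.Walk y y), w.IsCycle → w.length < c.length →
        ∀ i, i ≤ w.length → G.dist y (w.getVert i) = min i (w.length - i) := by
      intro y w hw hwlen
      by_contra hng
      obtain ⟨a', b', hab', hbm', q, hq, hq0, hqlt, hqdisj⟩ :=
        SECAux.exists_shortcut hG hw hng
      obtain ⟨u₁, u₂, hu₁, hu₂, hul₁, hul₂, _⟩ :=
        SECAux.theta hw hab' hbm' q hq hq0 hqlt hqdisj
      have hwodd : w.length % 2 = 1 := by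
        rcases Nat.even_or_odd w.length with he | ho
        · exact absurd (hmin y w hw he) (by omega)
        · exact Nat.odd_iff.mp ho
      have h1 : u₁.length < w.length := by omega
      have h2 : u₂.length < w.length := by omega
      have hpar : Even u₁.length ∨ Even u₂.length := by
        rw [Nat.even_iff, Nat.even_iff]
        omega
      rcases hpar with he | he
      · exact absurd (hmin _ u₁ hu₁ he) (by omega)
      · exact absurd (hmin _ u₂ hu₂ he) (by omega)
    obtain ⟨T₁, hT₁, e₁, he₁⟩ := SECAux.geodesic_fund hG w₁ hw₁ (hshort _ w₁ hw₁ hlen1)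
    obtain ⟨T₂, hT₂, e₂, he₂⟩ := SECAux.geodesic_fund hG w₂ hw₂ (hshort _ w₂ hw₂ hlen2)
    exact ⟨_, _, T₁, T₂, _, _, w₁, w₂, e₁, e₂, hT₁, hT₂, he₁, he₂, hsym⟩
end

section
/- Let G be a connected simple graph with girth g. If g is odd, then every cycle of G of length g is a fundamental cycle of a BFS tree rooted at some vertex of G. -/
open SimpleGraph

namespace BFSAux
variable {V : Type*} {G : SimpleGraph V}
open SimpleGraph.Walk

lemma edge_getVert_mem {u v : V} (p : G.Walk u v) {i : ℕ} (hi : i < p.length) :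
    s(p.getVert i, p.getVert (i+1)) ∈ p.edges := by
  induction p generalizing i with
  | nil => simp at hi
  | @cons a b c h q ih =>
    cases i with
    | zero =>
      simp [Walk.getVert_cons_succ, Walk.getVert_zero]
    | succ n =>
      have := ih (i := n) (by simpa using hi)
      simpa [Walk.getVert_cons_succ] using Or.inr this

lemma mem_edges_getVert {u v : V} (p : G.Walk u v) {e : Sym2 V} (he : e ∈ p.edges) :
    ∃ i < p.length, e = s(p.getVert i, p.getVert (i+1)) := by
  induction p with
  | nil => simp at he
  | @cons a b c h q ih =>
    rcases (by simpa using he : e = s(a, b) ∨ e ∈ q.edges) with h1 | h1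
    · exact ⟨0, by simp, by simpa [Walk.getVert_cons_succ, Walk.getVert_zero]⟩
    · obtain ⟨i, hi, hei⟩ := ih h1
      exact ⟨i + 1, by simpa using Nat.succ_lt_succ hi, by simpa [Walk.getVert_cons_succ]⟩

lemma IsPath.getVert_inj {u v : V} {p : G.Walk u v} (hp : p.IsPath) :
    ∀ i, i ≤ p.length → ∀ j, j ≤ p.length → p.getVert i = p.getVert j → i = j := by
  induction p with
  | nil => intro i hi j hj _; simp at hi hj; omega
  | @cons a b c h q ih =>
    intro i hi j hj hij
    rw [Walk.cons_isPath_iff] at hp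
    cases i with
    | zero =>
      cases j with
      | zero => rfl
      | succ n =>
        exfalso
        rw [Walk.getVert_zero, Walk.getVert_cons_succ] at hij
        exact hp.2 (Walk.mem_support_iff_exists_getVert.mpr ⟨n, hij.symm, by simpa using hj⟩)
    | succ m =>
      cases j with
      | zero =>
        exfalso
        rw [Walk.getVert_zero, Walk.getVert_cons_succ] at hij
        exact hp.2 (Walk.mem_support_iff_exists_getVert.mpr ⟨m, hij, by simpa using hi⟩)
      | succ n =>
        rw [Walk.getVert_cons_succ, Walk.getVert_cons_succ] at hij
        have := ih hp.1 m (by simpa using hi) n (by simpa using hj) hij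
        omega

lemma IsCycle.getVert_inj {u : V} {c : G.Walk u u} (hc : c.IsCycle) :
    ∀ i, 1 ≤ i → i ≤ c.length → ∀ j, 1 ≤ j → j ≤ c.length → c.getVert i = c.getVert j → i = j := by
  intro i hi1 hi2 j hj1 hj2 hij
  have hnn : ¬ c.Nil := by
    rw [Walk.nil_iff_length_eq]
    have := hc.three_le_length
    omega
  have htp : c.tail.IsPath := by
    rw [Walk.isPath_def, Walk.support_tail_of_not_nil _ hnn]
    exact hc.2
  have hlt : c.tail.length + 1 = c.length := Walk.length_tail_add_one hnn
  have h1 : c.tail.getVert (i - 1) = c.tail.getVert (j - 1) := by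
    rw [Walk.getVert_tail, Walk.getVert_tail]
    have hi' : i - 1 + 1 = i := by omega
    have hj' : j - 1 + 1 = j := by omega
    rw [hi', hj', hij]
  have := IsPath.getVert_inj htp (i-1) (by omega) (j-1) (by omega) h1
  omega

lemma not_mem_edges_of_isPath {u b : V} {q : G.Walk u b} (hq : q.IsPath) (hub : u ≠ b)
    (h1 : q.length ≠ 1) : s(b, u) ∉ q.edges := by
  intro hmem
  cases q with
  | nil => simp at hmem
  | @cons _ w _ h1' r =>
    rw [Walk.cons_isPath_iff] at hq
    rcases (by simpa using hmem : s(b, u) = s(u, w) ∨ s(b, u) ∈ r.edges) with h2 | h2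
    · rw [Sym2.eq_iff] at h2
      rcases h2 with ⟨rfl, _⟩ | ⟨rfl, _⟩
      · exact hub rfl
      · -- w = b, r : G.Walk b b is a path, so r = nil, length = 1
        have : r = Walk.nil := (Walk.isPath_iff_eq_nil (p := r)).mp hq.1
        subst this
        simp at h1
    · exact hq.2 (Walk.snd_mem_support_of_mem_edges r h2)

lemma cycle_of_two_paths :
    ∀ (m : ℕ) {u v : V} (p q : G.Walk u v), p.IsPath → q.IsPath → p ≠ q →
      2 * p.length + q.length ≤ m →
      ∃ (x : V) (w : G.Walk x x), w.IsCycle ∧ w.length ≤ p.length + q.length := by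
  classical
  intro m
  induction m with
  | zero =>
    intro u v p q hp hq hne hm
    have hp0 : p.length = 0 := by omega
    have hq0 : q.length = 0 := by omega
    have huv : u = v := Walk.eq_of_length_eq_zero hp0
    subst huv
    rw [(Walk.isPath_iff_eq_nil (p := p)).mp hp, (Walk.isPath_iff_eq_nil (p := q)).mp hq] at hne
    exact absurd rfl hne
  | succ n ih =>
    intro u v p q hp hq hne hm
    cases p with
    | nil =>
      rw [(Walk.isPath_iff_eq_nil (p := q)).mp hq] at hne
      exact absurd rfl hne
    | @cons _ b _ h p' =>
      have hp' : p'.IsPath := hp.of_cons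
      have hup' : u ∉ p'.support := (Walk.cons_isPath_iff h p').mp hp |>.2
      by_cases hb : b ∈ q.support
      · set q1 := q.takeUntil b hb with hq1def
        set q2 := q.dropUntil b hb with hq2def
        have hspec : q1.append q2 = q := q.take_spec hb
        have hq1 : q1.IsPath := hq.takeUntil hb
        have hq2 : q2.IsPath := hq.dropUntil hb
        have hlenq : q1.length + q2.length = q.length := by
          rw [← Walk.length_append, hspec]
        have hub : u ≠ b := h.ne
        have h0 : q1.length ≠ 0 := fun h0 => hub (Walk.eq_of_length_eq_zero h0)
        by_cases h1 : q1.length = 1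
        · -- q = cons h' q2, recurse on p', q2
          have hq' : q = Walk.cons h q2 := by
            cases hq1eq : q1 with
            | nil => rw [hq1eq] at h1; simp at h1
            | @cons _ w _ h'' r =>
              have hw : r.length = 0 := by
                rw [hq1eq] at h1; simpa using h1
              have hwb : w = b := Walk.eq_of_length_eq_zero hw
              subst hwb
              have hr : r = Walk.nil := by
                cases r with
                | nil => rfl
                | cons _ _ => simp at hw
              subst hr
              rw [← hspec, hq1eq]
              simp
          have hne' : p' ≠ q2 := by
            rintro rfl
            exact hne (by rw [hq'])
          obtain ⟨x, w, hw, hwl⟩ := ih p' q2 hp' hq2 hne'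
            (by simp only [Walk.length_cons] at hm; omega)
          exact ⟨x, w, hw, by simp only [Walk.length_cons]; omega⟩
        · -- cycle: cons h.symm q1 : Walk b b
          refine ⟨b, Walk.cons h.symm q1, ?_, ?_⟩
          · rw [Walk.cons_isCycle_iff]
            exact ⟨hq1, not_mem_edges_of_isPath hq1 hub h1⟩
          · have := q.length_takeUntil_le hb
            simp only [Walk.length_cons]
            omega
      · -- b ∉ q.support, recurse on p' and cons h.symm q
        have hq'path : (Walk.cons h.symm q).IsPath := by
          rw [Walk.cons_isPath_iff]
          exact ⟨hq, hb⟩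
        have hne' : p' ≠ Walk.cons h.symm q := by
          rintro rfl
          exact hup' (by simp)
        obtain ⟨x, w, hw, hwl⟩ := ih p' (Walk.cons h.symm q) hp' hq'path hne'
          (by simp only [Walk.length_cons] at hm ⊢; omega)
        exact ⟨x, w, hw, by simp only [Walk.length_cons] at hwl ⊢; omega⟩


lemma dist_getVert_eq (hG : G.Connected) {a : V} (c : G.Walk a a) {k : ℕ}
    (hk : 2 * k < c.length)
    (hmin : ∀ (x : V) (w : G.Walk x x), w.IsCycle → c.length ≤ w.length)
    (hinj : ∀ i, i ≤ k → ∀ j, j ≤ k → c.getVert i = c.getVert j → i = j) :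
    ∀ i, i ≤ k → G.dist a (c.getVert i) = i := by
  have harc : ∀ i, i ≤ k → ∃ A : G.Walk a (c.getVert i),
      A.length = i ∧ A.IsPath ∧ ∀ u ∈ A.support, ∃ j ≤ i, u = c.getVert j := by
    intro i
    induction i with
    | zero =>
      intro _
      refine ⟨Walk.nil.copy rfl (c.getVert_zero).symm, by simp, by simp, ?_⟩
      intro u hu
      simp only [Walk.support_copy, Walk.support_nil, List.mem_singleton] at hu
      exact ⟨0, le_rfl, by simp [hu, c.getVert_zero]⟩
    | succ i ih =>
      intro hik
      obtain ⟨A, hAl, hAp, hAs⟩ := ih (by omega)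
      have hadj : G.Adj (c.getVert i) (c.getVert (i+1)) :=
        c.adj_getVert_succ (by omega)
      have hnm : c.getVert (i+1) ∉ A.support := by
        intro hmem
        obtain ⟨j, hj, hje⟩ := hAs _ hmem
        have := hinj (i+1) hik j (by omega) hje
        omega
      refine ⟨A.concat hadj, by simp [Walk.length_concat, hAl], ?_, ?_⟩
      · rw [Walk.isPath_def, Walk.support_concat]
        rw [Walk.isPath_def] at hAp
        simp [List.concat_eq_append, List.nodup_append, hAp, hnm]
        exact fun y hy hy' => hnm (hy' ▸ hy)
      · intro u hu
        rw [Walk.support_concat] at hu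
        rcases List.mem_append.mp hu with h1 | h1
        · obtain ⟨j, hj, hje⟩ := hAs _ h1
          exact ⟨j, by omega, hje⟩
        · exact ⟨i+1, le_rfl, by simpa using h1⟩
  intro i hi
  obtain ⟨A, hAl, hAp, _⟩ := harc i hi
  refine le_antisymm (le_of_le_of_eq (SimpleGraph.dist_le A) hAl) ?_
  by_contra hlt
  push_neg at hlt
  obtain ⟨P, hPp, hPl⟩ := Reachable.exists_path_of_dist (hG.preconnected a (c.getVert i))
  have hne : P ≠ A := fun h => by rw [h, hAl] at hPl; omega
  obtain ⟨x, w, hw, hwl⟩ := cycle_of_two_paths (2 * P.length + A.length) P A hPp hAp hne le_rfl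
  have := hmin x w hw
  omega


lemma exists_closer (hG : G.Connected) {a v : V} (hva : v ≠ a) :
    ∃ u, G.Adj v u ∧ G.dist a u + 1 = G.dist a v := by
  obtain ⟨w, hwl⟩ := (hG.preconnected v a).exists_walk_length_eq_dist
  cases w with
  | nil => exact absurd rfl hva
  | @cons _ u _ h w' =>
    refine ⟨u, h, ?_⟩
    have h1 : G.dist a u ≤ w'.length := by
      have := SimpleGraph.dist_le w'.reverse
      rwa [Walk.length_reverse] at this
    have h2 : G.dist a v ≤ G.dist a u + 1 := by
      have ht := hG.dist_triangle (u := a) (v := u) (w := v)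
      have hd1 : G.dist u v = 1 := by
        rw [SimpleGraph.dist_eq_one_iff_adj]; exact h.symm
      omega
    have h3 : G.dist a v = w'.length + 1 := by
      rw [SimpleGraph.dist_comm] at hwl
      simpa [Walk.length_cons] using hwl.symm
    omega

end BFSAux

/-- In a connected graph of odd girth, every cycle of girth length is a fundamental cycle
of a BFS tree rooted at some vertex of `G`. -/
theorem girth_cycle_is_fundamental_of_odd_girth
    {V : Type*} [Fintype V] (G : SimpleGraph V) (hG : G.Connected)
    (hodd : Odd G.girth)
    {a : V} (c : G.Walk a a) (hc : c.IsCycle) (hlen : c.length = G.girth) :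
    ∃ (x : V) (T : SimpleGraph V), IsBFSTree G T x ∧
      ∃ e : Sym2 V, IsFundCycle G T c e := by
  classical
  have hmin : ∀ (x : V) (w : G.Walk x x), w.IsCycle → c.length ≤ w.length := by
    intro x w hw
    have h1 : G.egirth ≤ w.length := le_egirth.mp le_rfl x w hw
    have h2 : G.girth ≤ w.length := by
      have := ENat.toNat_le_toNat h1 (by simp)
      simpa [SimpleGraph.girth] using this
    omega
  have hoddc : Odd c.length := by rw [hlen]; exact hodd
  obtain ⟨k, hk2⟩ := hoddc
  have hg3 : 3 ≤ c.length := hc.three_le_length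
  have hk1 : 1 ≤ k := by omega
  have hinjC := BFSAux.IsCycle.getVert_inj hc
  have ha0 : c.getVert 0 = a := c.getVert_zero
  have hag : c.getVert c.length = a := c.getVert_length
  have hne_a : ∀ i, 1 ≤ i → i ≤ c.length - 1 → c.getVert i ≠ a := by
    intro i h1 h2 he
    have := hinjC i h1 (by omega) c.length (by omega) le_rfl (by rw [he, hag])
    omega
  have hinj0 : ∀ i, i ≤ k → ∀ j, j ≤ k → c.getVert i = c.getVert j → i = j := by
    intro i hi j hj he
    rcases Nat.eq_zero_or_pos i with rfl | hi1
    · rcases Nat.eq_zero_or_pos j with rfl | hj1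
      · rfl
      · exact absurd (by rw [← he, ha0]) (hne_a j hj1 (by omega))
    · rcases Nat.eq_zero_or_pos j with rfl | hj1
      · exact absurd (by rw [he, ha0]) (hne_a i hi1 (by omega))
      · exact hinjC i hi1 (by omega) j hj1 (by omega) he
  have hinjR : ∀ i, i ≤ k → ∀ j, j ≤ k →
      c.reverse.getVert i = c.reverse.getVert j → i = j := by
    intro i hi j hj he
    rw [Walk.getVert_reverse, Walk.getVert_reverse] at he
    have := hinjC (c.length - i) (by omega) (by omega) (c.length - j) (by omega) (by omega) he
    omega
  have hfwd : ∀ i, i ≤ k → G.dist a (c.getVert i) = i :=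
    BFSAux.dist_getVert_eq hG c (by omega) hmin hinj0
  have hminR : ∀ (x : V) (w : G.Walk x x), w.IsCycle → c.reverse.length ≤ w.length := by
    simpa [Walk.length_reverse] using hmin
  have hrev : ∀ i, i ≤ k → G.dist a (c.getVert (c.length - i)) = i := by
    intro i hi
    have := BFSAux.dist_getVert_eq hG c.reverse
      (by rw [Walk.length_reverse]; omega) hminR hinjR i hi
    rwa [Walk.getVert_reverse] at this
  have hstep : ∀ v : V, v ≠ a → ∃ u, G.Adj v u ∧ G.dist a u + 1 = G.dist a v :=
    fun v hv => BFSAux.exists_closer hG hv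
  -- the parent function
  have hparex : ∃ par : V → V,
      (∀ v, v ≠ a → G.Adj v (par v) ∧ G.dist a (par v) + 1 = G.dist a v) ∧
      (∀ i, i < k → par (c.getVert (i+1)) = c.getVert i) ∧
      (∀ i, i < k → par (c.getVert (c.length - (i+1))) = c.getVert (c.length - i)) := by
    refine ⟨fun v =>
      if h1 : ∃ i, i < k ∧ v = c.getVert (i+1) then c.getVert h1.choose
      else if h2 : ∃ i, i < k ∧ v = c.getVert (c.length - (i+1)) then
        c.getVert (c.length - h2.choose)
      else if h3 : v = a then v
      else (hstep v h3).choose, ?_, ?_, ?_⟩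
    · intro v hva
      dsimp only
      have hX1 : ∀ j : ℕ, j < k → v = c.getVert (j+1) →
          G.Adj v (c.getVert j) ∧ G.dist a (c.getVert j) + 1 = G.dist a v := by
        intro j hjk hje
        constructor
        · rw [hje]
          exact (c.adj_getVert_succ (by omega)).symm
        · rw [hje, hfwd j (by omega), hfwd (j + 1) (by omega)]
      have hX2 : ∀ j : ℕ, j < k → v = c.getVert (c.length - (j+1)) →
          G.Adj v (c.getVert (c.length - j)) ∧
            G.dist a (c.getVert (c.length - j)) + 1 = G.dist a v := by
        intro j hjk hje
        constructor
        · rw [hje]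
          have hadj := c.adj_getVert_succ
            (show c.length - (j+1) < c.length by omega)
          rwa [show c.length - (j+1) + 1 = c.length - j from by omega] at hadj
        · rw [hje, hrev j (by omega), hrev (j + 1) (by omega)]
      split_ifs with h1 h2
      · exact hX1 h1.choose h1.choose_spec.1 h1.choose_spec.2
      · exact hX2 h2.choose h2.choose_spec.1 h2.choose_spec.2
      · exact (hstep v hva).choose_spec
    · intro i hik
      have hex : ∃ j, j < k ∧ c.getVert (i+1) = c.getVert (j+1) := ⟨i, hik, rfl⟩
      dsimp only
      rw [dif_pos hex]
      obtain ⟨hjk, hje⟩ := hex.choose_spec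
      have : hex.choose = i := by
        have := hinj0 (hex.choose + 1) (by omega) (i+1) (by omega) hje.symm
        omega
      rw [this]
    · intro i hik
      have hn1 : ¬ ∃ j, j < k ∧ c.getVert (c.length - (i+1)) = c.getVert (j+1) := by
        rintro ⟨j, hj, he⟩
        have := hinjC (c.length - (i+1)) (by omega) (by omega) (j+1) (by omega) (by omega) he
        omega
      have hex : ∃ j, j < k ∧ c.getVert (c.length - (i+1)) = c.getVert (c.length - (j+1)) :=
        ⟨i, hik, rfl⟩
      dsimp only
      rw [dif_neg hn1, dif_pos hex]
      obtain ⟨hjk, hje⟩ := hex.choose_spec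
      have : hex.choose = i := by
        have := hinjC (c.length - (i+1)) (by omega) (by omega)
          (c.length - (hex.choose + 1)) (by omega) (by omega) hje
        omega
      rw [this]
  obtain ⟨par, hP1, hP2, hP3⟩ := hparex
  set T : SimpleGraph V := SimpleGraph.fromRel (fun u v => v ≠ a ∧ u = par v) with hTdef
  have hTadj : ∀ u v, T.Adj u v ↔ u ≠ v ∧ ((v ≠ a ∧ u = par v) ∨ (u ≠ a ∧ v = par u)) := by
    intro u v
    rw [hTdef, SimpleGraph.fromRel_adj]
  have hTG : T ≤ G := by
    intro u v h
    rw [hTadj] at h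
    rcases h with ⟨hne, ⟨hva, rfl⟩ | ⟨hua, rfl⟩⟩
    · exact ((hP1 v hva).1).symm
    · exact (hP1 u hua).1
  have hTdiff : ∀ u v, T.Adj u v →
      G.dist a u + 1 = G.dist a v ∨ G.dist a v + 1 = G.dist a u := by
    intro u v h
    rw [hTadj] at h
    rcases h with ⟨hne, ⟨hva, rfl⟩ | ⟨hua, rfl⟩⟩
    · exact Or.inl (hP1 v hva).2
    · exact Or.inr (hP1 u hua).2
  have hTwalk : ∀ n v, G.dist a v ≤ n → ∃ w : T.Walk a v, w.length = G.dist a v := by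
    intro n
    induction n with
    | zero =>
      intro v hv
      have : a = v := hG.dist_eq_zero_iff.mp (by omega)
      subst this
      exact ⟨Walk.nil, by rw [SimpleGraph.dist_self]; rfl⟩
    | succ n ih =>
      intro v hv
      by_cases hva : v = a
      · subst hva
        exact ⟨Walk.nil, by rw [SimpleGraph.dist_self]; rfl⟩
      · have h1 := hP1 v hva
        have hd : 1 ≤ G.dist a v := hG.pos_dist_of_ne (fun h => hva h.symm)
        obtain ⟨w, hw⟩ := ih (par v) (by omega)
        have hTpv : T.Adj (par v) v := by
          rw [hTadj]
          exact ⟨fun he => by rw [he] at h1; omega, Or.inl ⟨hva, rfl⟩⟩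
        exact ⟨w.concat hTpv, by rw [Walk.length_concat, hw]; omega⟩
  have hTreach : ∀ v, T.Reachable a v := fun v =>
    ⟨(hTwalk (G.dist a v) v le_rfl).choose⟩
  haveI : Nonempty V := ⟨a⟩
  have hTconn : T.Connected := ⟨fun u v => (hTreach u).symm.trans (hTreach v)⟩
  have hTdist : ∀ v, T.dist a v = G.dist a v := by
    intro v
    refine le_antisymm ?_ ?_
    · obtain ⟨w, hw⟩ := hTwalk (G.dist a v) v le_rfl
      exact le_of_le_of_eq (SimpleGraph.dist_le w) hw
    · obtain ⟨w, hw⟩ := (hTreach v).exists_walk_length_eq_dist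
      have h1 := SimpleGraph.dist_le (w.mapLe hTG)
      have h2 : (w.mapLe hTG).length = w.length := by
        simp [Walk.mapLe]
      omega
  have hTac : T.IsAcyclic := by
    intro x w hw
    have hsne : w.support.toFinset.Nonempty := ⟨x, by simp⟩
    obtain ⟨m, hmS, hmax⟩ := Finset.exists_max_image w.support.toFinset
      (fun u => G.dist a u) hsne
    have hm : m ∈ w.support := by simpa using hmS
    set w2 := w.rotate m hm with hw2def
    have hw2 : w2.IsCycle := hw.rotate hm
    have hmax2 : ∀ u ∈ w2.support, G.dist a u ≤ G.dist a m := by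
      intro u hu
      rw [Walk.support_eq_cons] at hu
      rcases List.mem_cons.mp hu with rfl | hu
      · exact le_rfl
      · have : u ∈ w.support.tail :=
          (List.IsRotated.mem_iff (Walk.support_rotate w m hm)).mp hu
        have : u ∈ w.support := by
          rw [Walk.support_eq_cons]
          exact List.mem_cons_of_mem _ this
        exact hmax u (by simpa using this)
    have hlen3 : 3 ≤ w2.length := hw2.three_le_length
    have hadj1 : T.Adj m (w2.getVert 1) := by
      have := w2.adj_getVert_succ (show 0 < w2.length by omega)
      simpa using this
    have hadj2 : T.Adj (w2.getVert (w2.length - 1)) m := by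
      have := w2.adj_getVert_succ (show w2.length - 1 < w2.length by omega)
      rwa [show w2.length - 1 + 1 = w2.length from by omega, Walk.getVert_length] at this
    have hy1 : w2.getVert 1 ∈ w2.support :=
      Walk.mem_support_iff_exists_getVert.mpr ⟨1, rfl, by omega⟩
    have hy2 : w2.getVert (w2.length - 1) ∈ w2.support :=
      Walk.mem_support_iff_exists_getVert.mpr ⟨w2.length - 1, rfl, by omega⟩
    have h1 : w2.getVert 1 = par m := by
      rcases (hTadj _ _).mp hadj1 with ⟨hne, h | h⟩
      · exfalso
        have hh := (hP1 _ h.1).2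
        rw [← h.2] at hh
        have := hmax2 _ hy1
        omega
      · exact h.2
    have h2 : w2.getVert (w2.length - 1) = par m := by
      rcases (hTadj _ _).mp hadj2 with ⟨hne, h | h⟩
      · exact h.2
      · exfalso
        have hh := (hP1 _ h.1).2
        rw [← h.2] at hh
        have := hmax2 _ hy2
        omega
    have := BFSAux.IsCycle.getVert_inj hw2 1 (by omega) (by omega)
      (w2.length - 1) (by omega) (by omega) (by rw [h1, h2])
    omega
  refine ⟨a, T, ⟨hTG, ⟨hTconn, hTac⟩, hTdist⟩, s(c.getVert k, c.getVert (k+1)), hc, ?_, ?_, ?_, ?_⟩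
  · exact c.adj_getVert_succ (by omega)
  · intro h
    rw [SimpleGraph.mem_edgeSet] at h
    have hd1 : G.dist a (c.getVert k) = k := hfwd k le_rfl
    have hd2 : G.dist a (c.getVert (k+1)) = k := by
      have := hrev k le_rfl
      rwa [show c.length - k = k + 1 from by omega] at this
    rcases hTdiff _ _ h with h' | h' <;> omega
  · exact BFSAux.edge_getVert_mem c (by omega)
  · intro f hf
    obtain ⟨i, hil, rfl⟩ := BFSAux.mem_edges_getVert c hf
    rcases lt_trichotomy i k with hik | rfl | hik
    · right
      rw [SimpleGraph.mem_edgeSet, hTadj]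
      exact ⟨(c.adj_getVert_succ (by omega)).ne,
        Or.inl ⟨hne_a (i+1) (by omega) (by omega), (hP2 i hik).symm⟩⟩
    · left; rfl
    · right
      rw [SimpleGraph.mem_edgeSet, hTadj]
      have hjk : c.length - i - 1 < k := by omega
      have hpi : par (c.getVert i) = c.getVert (i+1) := by
        have := hP3 _ hjk
        rwa [show c.length - (c.length - i - 1 + 1) = i from by omega,
          show c.length - (c.length - i - 1) = i + 1 from by omega] at this
      exact ⟨(c.adj_getVert_succ (by omega)).ne,
        Or.inr ⟨hne_a i (by omega) (by omega), hpi.symm⟩⟩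
end
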